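/- arXiv:1603.04191 — 10 statements merged into one kernel-verified Lean document; each statement's English description precedes it below -/
import Mathlib

section
/- Let Q be a quiver with finitely many vertices such that all singular vertices lie in Q'⁰ ⊆ Q⁰ and every cycle of Q meets Q'⁰. For v ∈ Q⁰ with B_v finite and nonempty, in any algebra A with a Cuntz-Krieger Q-family {v, e, e*}, one has v = Σ_{α ∈ B_v} α α*, where for a path α = α₁…αₙ, α denotes the product e_{α₁}⋯e_{αₙ} and α* the product e*_{αₙ}⋯e*_{α₁}. -/
structure Qvr where
  V : Type
  E : Type
  s : E → V
  r : E → V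

namespace Qvr

variable (Q : Qvr)

/-- A finite list of edges is a path if consecutive edges are composable. -/
def IsPath (μ : List Q.E) : Prop :=
  μ.Chain' (fun e f => Q.r e = Q.s f)

/-- The source of a nonempty path. -/
def pathSrc (μ : List Q.E) (h : μ ≠ []) : Q.V :=
  Q.s (μ.head h)

/-- The range of a nonempty path. -/
def pathRng (μ : List Q.E) (h : μ ≠ []) : Q.V :=
  Q.r (μ.getLast h)

/-- A cycle is a nonempty closed path with pairwise distinct sources of its edges. -/
def IsCycle (μ : List Q.E) : Prop :=
  ∃ h : μ ≠ [], Q.IsPath μ ∧ Q.pathRng μ h = Q.pathSrc μ h ∧ (μ.map Q.s).Nodup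

/-- Every cycle of `Q` passes through a vertex of `W`. -/
def CyclesMeet (W : Set Q.V) : Prop :=
  ∀ μ : List Q.E, Q.IsCycle μ → ∃ e ∈ μ, Q.s e ∈ W

/-- A sink is a vertex emitting no edges. -/
def IsSink (v : Q.V) : Prop := ∀ e : Q.E, Q.s e ≠ v

/-- A regular vertex emits at least one and only finitely many edges. -/
def IsRegular (v : Q.V) : Prop :=
  {e : Q.E | Q.s e = v}.Nonempty ∧ {e : Q.E | Q.s e = v}.Finite

end Qvr

namespace Qvr

/-- `μ` is a nonempty path from `v` whose range lies in `W` and all of whose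
intermediate range vertices lie outside `W`. -/
structure IsBPath (Q : Qvr) (W : Set Q.V) (v : Q.V) (μ : List Q.E) : Prop where
  ne : μ ≠ []
  path : Q.IsPath μ
  src : Q.pathSrc μ ne = v
  rng_mem : Q.pathRng μ ne ∈ W
  mid : ∀ i : Fin μ.length, (i : ℕ) + 1 < μ.length → Q.r (μ.get i) ∉ W

/-- The set `B_v` of the paper. -/
def BSet (Q : Qvr) (W : Set Q.V) (v : Q.V) : Set (List Q.E) :=
  {μ | Q.IsBPath W v μ}

end Qvr

/-- A Cuntz–Krieger `Q`-family in a ring `A`: pairwise orthogonal idempotents indexed by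
vertices, together with elements `X e` (edges) and `Y e` (ghost edges) satisfying the
Cuntz–Krieger relations. -/
structure IsQFamily (Q : Qvr) [DecidableEq Q.V] [DecidableEq Q.E] {A : Type} [Ring A]
    (P : Q.V → A) (X Y : Q.E → A) : Prop where
  orth : ∀ v w : Q.V, P v * P w = if v = w then P v else 0
  src_mul : ∀ e : Q.E, P (Q.s e) * X e = X e
  mul_rng : ∀ e : Q.E, X e * P (Q.r e) = X e
  rng_mul : ∀ e : Q.E, P (Q.r e) * Y e = Y e
  mul_src : ∀ e : Q.E, Y e * P (Q.s e) = Y e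
  ck1 : ∀ e f : Q.E, Y e * X f = if e = f then P (Q.r e) else 0
  ck2 : ∀ (v : Q.V) (h : {e : Q.E | Q.s e = v}.Finite), {e : Q.E | Q.s e = v}.Nonempty →
    P v = ∑ e ∈ h.toFinset, X e * Y e

/-- The element of `A` corresponding to a path (product of the edge elements). -/
def pathProd {Q : Qvr} {A : Type} [Ring A] (X : Q.E → A) (μ : List Q.E) : A :=
  (μ.map X).prod

/-- The element of `A` corresponding to the ghost path `μ*` (product of the ghost edge
elements in reverse order). -/
def pathStar {Q : Qvr} {A : Type} [Ring A] (Y : Q.E → A) (μ : List Q.E) : A :=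
  (μ.reverse.map Y).prod

namespace Aux
open Qvr

variable {Q : Qvr} {W : Set Q.V}

lemma isBPath_singleton {e : Q.E} (hr : Q.r e ∈ W) : Q.IsBPath W (Q.s e) [e] := by
  refine ⟨by simp, by simp [Qvr.IsPath, List.Chain'], by simp [Qvr.pathSrc], by simpa [Qvr.pathRng], ?_⟩
  intro i hi
  simp at hi

lemma isBPath_cons {e : Q.E} {β : List Q.E} (hr : Q.r e ∉ W)
    (hβ : Q.IsBPath W (Q.r e) β) : Q.IsBPath W (Q.s e) (e :: β) := by
  obtain ⟨hne, hp, hs, hrng, hmid⟩ := hβ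
  refine ⟨by simp, ?_, ?_, ?_, ?_⟩
  · refine List.isChain_cons.2 ⟨?_, hp⟩
    intro f hf
    rw [List.head?_eq_head hne] at hf
    rw [Option.mem_def, Option.some.injEq] at hf
    subst hf
    exact hs.symm
  · simp [Qvr.pathSrc]
  · simpa [Qvr.pathRng, List.getLast_cons hne] using hrng
  · rintro ⟨iv, hlt⟩ hi
    have hi' : iv + 1 < (e :: β).length := hi
    cases iv with
    | zero => simpa using hr
    | succ k =>
      simp only [List.length_cons] at hi' hlt
      have := hmid ⟨k, by omega⟩ (by show k + 1 < β.length; omega)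
      simpa using this

lemma isBPath_cons_elim {v : Q.V} {e : Q.E} {β : List Q.E}
    (h : Q.IsBPath W v (e :: β)) :
    Q.s e = v ∧ ((β = [] ∧ Q.r e ∈ W) ∨ (Q.r e ∉ W ∧ Q.IsBPath W (Q.r e) β)) := by
  obtain ⟨hne, hp, hs, hrng, hmid⟩ := h
  refine ⟨by simpa [Qvr.pathSrc] using hs, ?_⟩
  rcases eq_or_ne β [] with hb | hb
  · subst hb
    exact Or.inl ⟨rfl, by simpa [Qvr.pathRng] using hrng⟩
  · right
    have hlenpos : 0 < β.length := List.length_pos_iff.2 hb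
    have hrW : Q.r e ∉ W := by
      have := hmid ⟨0, by simp⟩ (by simp; omega)
      simpa using this
    have hchain := List.isChain_cons.1 hp
    have hsrc : Q.pathSrc β hb = Q.r e := by
      have := hchain.1 (β.head hb) (by rw [List.head?_eq_head hb]; rfl)
      simpa [Qvr.pathSrc] using this.symm
    refine ⟨hrW, hb, hchain.2, hsrc, ?_, ?_⟩
    · simpa [Qvr.pathRng, List.getLast_cons hb] using hrng
    · rintro ⟨k, hk⟩ hik
      have hik' : k + 1 < β.length := hik
      have := hmid ⟨k + 1, by simp only [List.length_cons]; omega⟩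
        (by show k + 1 + 1 < (e :: β).length; simp only [List.length_cons]; omega)
      simpa using this

lemma reach (Q : Qvr) [Fintype Q.V] (W : Set Q.V)
    (hsing : ∀ v, v ∉ W → Q.IsRegular v) (hcyc : Q.CyclesMeet W) :
    ∀ u, u ∉ W → (Q.BSet W u).Nonempty := by
  by_contra hcon
  push_neg at hcon
  obtain ⟨u, huW, hu⟩ := hcon
  set Bad : Q.V → Prop := fun x => x ∉ W ∧ ¬ (Q.BSet W x).Nonempty with hBadDef
  have hBadu : Bad u := ⟨huW, by rw [hu]; exact Set.not_nonempty_empty⟩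
  have hstep : ∀ x, Bad x → ∃ e, Q.s e = x ∧ Bad (Q.r e) := by
    rintro x ⟨hxW, hx⟩
    obtain ⟨e, he⟩ := (hsing x hxW).1
    have hre : Q.r e ∉ W := fun hrW => hx ⟨[e], he ▸ isBPath_singleton hrW⟩
    exact ⟨e, he, hre, fun ⟨β, hβ⟩ => hx ⟨e :: β, he ▸ isBPath_cons hre hβ⟩⟩
  haveI : Nonempty Q.E := ⟨(hstep u hBadu).choose⟩
  classical
  set ed : Q.V → Q.E := fun x => if h : Bad x then (hstep x h).choose else Classical.arbitrary _
    with hedDef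
  set g : Q.V → Q.V := fun x => Q.r (ed x) with hgDef
  have hed : ∀ x, Bad x → Q.s (ed x) = x ∧ Bad (g x) := by
    intro x h
    simp only [hedDef, hgDef, dif_pos h]
    exact ⟨(hstep x h).choose_spec.1, (hstep x h).choose_spec.2⟩
  set f : ℕ → Q.V := fun n => g^[n] u with hfDef
  have hfg : ∀ n, f (n + 1) = g (f n) := fun n => Function.iterate_succ_apply' g n u
  have hf : ∀ n, Bad (f n) := by
    intro n
    induction n with
    | zero => exact hBadu
    | succ n ih => rw [hfg]; exact (hed _ ih).2
  have hex : ∃ j, ∃ i, i < j ∧ f i = f j := by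
    obtain ⟨a, b, hab, hfab⟩ :=
      Fintype.exists_ne_map_eq_of_card_lt (fun i : Fin (Fintype.card Q.V + 1) => f i)
        (by simp)
    rcases lt_or_gt_of_ne (fun h : (a : ℕ) = (b : ℕ) => hab (Fin.ext h)) with h | h
    · exact ⟨b, a, h, hfab⟩
    · exact ⟨a, b, h, hfab.symm⟩
  obtain ⟨i, hij, hfij⟩ := Nat.find_spec hex
  set j0 := Nat.find hex with hj0
  have hdist : ∀ a b, a < b → b < j0 → f a ≠ f b := by
    intro a b hab hb h
    exact Nat.find_min hex hb ⟨a, hab, h⟩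
  set n := j0 - i with hn
  have hnpos : 0 < n := by omega
  set μ := (List.range n).map (fun k => ed (f (i + k))) with hμ
  have hμlen : μ.length = n := by simp [hμ]
  have hμget : ∀ (k : ℕ) (hk : k < μ.length), μ[k] = ed (f (i + k)) := by
    intro k hk
    simp [hμ]
  have hsrck : ∀ k, Q.s (ed (f k)) = f k := fun k => (hed _ (hf k)).1
  have hrngk : ∀ k, Q.r (ed (f k)) = f (k + 1) := by
    intro k
    exact (hfg k).symm
  have hμne : μ ≠ [] := by
    apply List.ne_nil_of_length_pos
    omega
  have hcycμ : Q.IsCycle μ := by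
    refine ⟨hμne, ?_, ?_, ?_⟩
    · rw [Qvr.IsPath, List.Chain', List.isChain_iff_getElem]
      intro k hk
      rw [hμget, hμget]
      rw [hrngk, ← Nat.add_assoc]
      exact (hsrck _).symm
    · rw [Qvr.pathRng, Qvr.pathSrc, List.getLast_eq_getElem, List.head_eq_getElem,
        hμget, hμget, hrngk, hsrck]
      have h1 : i + (μ.length - 1) + 1 = j0 := by omega
      rw [h1, ← hfij]
      simp
    · have hmapeq : μ.map Q.s = (List.range n).map (fun k => f (i + k)) := by
        rw [hμ, List.map_map]
        apply List.map_congr_left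
        intro k hk
        exact hsrck _
      rw [hmapeq]
      apply List.Nodup.map_on _ List.nodup_range
      intro x hx y hy hxy
      rw [List.mem_range] at hx hy
      by_contra hne
      rcases Nat.lt_or_ge x y with h | h
      · exact hdist (i + x) (i + y) (by omega) (by omega) hxy
      · exact hdist (i + y) (i + x) (by omega) (by omega) hxy.symm
  obtain ⟨e, he, heW⟩ := hcyc μ hcycμ
  rw [hμ, List.mem_map] at he
  obtain ⟨k, hk, rfl⟩ := he
  rw [hsrck] at heW
  exact (hf _).1 heW

lemma pathProd_cons {A : Type} [Ring A] (X : Q.E → A) (e : Q.E) (β : List Q.E) :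
    pathProd X (e :: β) = X e * pathProd X β := by
  simp [pathProd]

lemma pathStar_cons {A : Type} [Ring A] (Y : Q.E → A) (e : Q.E) (β : List Q.E) :
    pathStar Y (e :: β) = pathStar Y β * Y e := by
  simp [pathStar]

lemma key (Q : Qvr) [Fintype Q.V] [DecidableEq Q.V] [DecidableEq Q.E]
    (W : Set Q.V) (hsing : ∀ v : Q.V, v ∉ W → Q.IsRegular v) (hcyc : Q.CyclesMeet W)
    {A : Type} [Ring A] (P : Q.V → A) (X Y : Q.E → A) (hfam : IsQFamily Q P X Y) :
    ∀ n : ℕ, ∀ v (hfin : (Q.BSet W v).Finite), (Q.BSet W v).Nonempty →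
      (∀ μ ∈ Q.BSet W v, μ.length ≤ n) →
      P v = ∑ μ ∈ hfin.toFinset, pathProd X μ * pathStar Y μ := by
  have hreach := reach Q W hsing hcyc
  intro n
  induction n with
  | zero =>
    rintro v hfin ⟨μ, hμ⟩ hlen
    exact absurd (List.length_eq_zero_iff.1 (Nat.le_zero.1 (hlen μ hμ))) hμ.ne
  | succ n ih =>
    intro v hfin hne hlen
    classical
    -- every edge out of v extends to a B-path
    have hEpath : ∀ e, Q.s e = v → ∃ μ ∈ Q.BSet W v, μ.head? = some e := by
      intro e he
      by_cases hre : Q.r e ∈ W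
      · exact ⟨[e], he ▸ isBPath_singleton hre, rfl⟩
      · obtain ⟨β, hβ⟩ := hreach _ hre
        exact ⟨e :: β, he ▸ isBPath_cons hre hβ, rfl⟩
    -- the set of edges out of v is finite
    set F : Q.E → List Q.E := fun e => if h : Q.s e = v then (hEpath e h).choose else []
      with hFdef
    have hFspec : ∀ e (h : Q.s e = v), F e ∈ Q.BSet W v ∧ (F e).head? = some e := by
      intro e h
      simp only [hFdef, dif_pos h]
      exact ⟨(hEpath e h).choose_spec.1, (hEpath e h).choose_spec.2⟩
    have hEfin : {e : Q.E | Q.s e = v}.Finite := by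
      apply Set.Finite.of_finite_image (f := F)
      · apply hfin.subset
        rintro _ ⟨e, he, rfl⟩
        exact (hFspec e he).1
      · intro a ha b hb hab
        have h1 := (hFspec a ha).2
        have h2 := (hFspec b hb).2
        rw [hab, h2] at h1
        exact (Option.some.injEq _ _ ▸ h1).symm ▸ rfl
    -- v emits at least one edge
    obtain ⟨μ0, hμ0⟩ := hne
    obtain ⟨m, t, rfl⟩ := List.exists_cons_of_ne_nil hμ0.ne
    have hm : Q.s m = v := (isBPath_cons_elim hμ0).1
    have hck2 := hfam.ck2 v hEfin ⟨m, hm⟩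
    set S := hfin.toFinset with hSdef
    -- each summand expands into a sum over the fiber
    have hterm : ∀ e ∈ hEfin.toFinset,
        X e * Y e = ∑ μ ∈ S.filter (fun μ => μ.head? = some e),
          pathProd X μ * pathStar Y μ := by
      intro e he
      rw [Set.Finite.mem_toFinset] at he
      by_cases hre : Q.r e ∈ W
      · have hfib : S.filter (fun μ => μ.head? = some e) = {[e]} := by
          ext μ
          simp only [Finset.mem_filter, hSdef, Set.Finite.mem_toFinset, Finset.mem_singleton]
          constructor
          · rintro ⟨hμ, hh⟩
            obtain ⟨e', t', rfl⟩ := List.exists_cons_of_ne_nil hμ.ne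
            rw [List.head?_cons, Option.some.injEq] at hh
            subst hh
            rcases (isBPath_cons_elim hμ).2 with ⟨rfl, _⟩ | ⟨hre', _⟩
            · rfl
            · exact absurd hre hre'
          · rintro rfl
            exact ⟨he ▸ isBPath_singleton hre, rfl⟩
        rw [hfib, Finset.sum_singleton]
        simp [pathProd, pathStar]
      · have hBne := hreach _ hre
        have hBfin : (Q.BSet W (Q.r e)).Finite := by
          apply Set.Finite.of_finite_image (f := fun β => e :: β)
          · apply hfin.subset
            rintro _ ⟨β, hβ, rfl⟩
            exact he ▸ isBPath_cons hre hβ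
          · intro a _ b _ hab
            exact List.cons_injective hab
        have hlen2 : ∀ β ∈ Q.BSet W (Q.r e), β.length ≤ n := by
          intro β hβ
          have := hlen (e :: β) (he ▸ isBPath_cons hre hβ)
          simpa using this
        have hPe := ih (Q.r e) hBfin hBne hlen2
        have hfib : S.filter (fun μ => μ.head? = some e)
            = hBfin.toFinset.image (fun β => e :: β) := by
          ext μ
          simp only [Finset.mem_filter, hSdef, Set.Finite.mem_toFinset, Finset.mem_image]
          constructor
          · rintro ⟨hμ, hh⟩
            obtain ⟨e', t', rfl⟩ := List.exists_cons_of_ne_nil hμ.ne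
            rw [List.head?_cons, Option.some.injEq] at hh
            subst hh
            rcases (isBPath_cons_elim hμ).2 with ⟨rfl, hre'⟩ | ⟨_, hβ⟩
            · exact absurd hre' hre
            · exact ⟨t', hβ, rfl⟩
          · rintro ⟨β, hβ, rfl⟩
            exact ⟨he ▸ isBPath_cons hre hβ, rfl⟩
        rw [hfib, Finset.sum_image (fun a _ b _ hab => List.cons_injective hab)]
        have : ∀ β, pathProd X (e :: β) * pathStar Y (e :: β)
            = X e * (pathProd X β * pathStar Y β) * Y e := by
          intro β
          rw [pathProd_cons, pathStar_cons]
          simp [mul_assoc]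
        simp only [this]
        rw [← Finset.sum_mul, ← Finset.mul_sum, ← hPe]
        rw [show X e * P (Q.r e) * Y e = (X e * P (Q.r e)) * Y e from rfl, hfam.mul_rng e]
    -- now reassemble
    rw [hck2, Finset.sum_congr rfl hterm]
    have hmaps : ∀ μ ∈ S, μ.head? ∈ hEfin.toFinset.image some := by
      intro μ hμ
      rw [hSdef, Set.Finite.mem_toFinset] at hμ
      obtain ⟨e', t', rfl⟩ := List.exists_cons_of_ne_nil hμ.ne
      rw [Finset.mem_image]
      exact ⟨e', hEfin.mem_toFinset.2 (isBPath_cons_elim hμ).1, rfl⟩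
    have hfw := Finset.sum_fiberwise_of_maps_to hmaps
      (fun μ => pathProd X μ * pathStar Y μ)
    rw [← hfw, Finset.sum_image (fun a _ b _ h => Option.some_injective _ h)]

end Aux

/-- Under the standing hypotheses (finitely many vertices, all singular
vertices in `W`, every cycle meets `W`), if `B_v` is finite and nonempty then in any ring
with a Cuntz–Krieger `Q`-family one has `P v = ∑_{α ∈ B_v} α α*`. -/
theorem stmt3 (Q : Qvr) [Fintype Q.V] [DecidableEq Q.V] [DecidableEq Q.E]
    (W : Set Q.V) (hsing : ∀ v : Q.V, v ∉ W → Q.IsRegular v) (hcyc : Q.CyclesMeet W)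
    {A : Type} [Ring A] (P : Q.V → A) (X Y : Q.E → A) (hfam : IsQFamily Q P X Y)
    (v : Q.V) (hfin : (Q.BSet W v).Finite) (hne : (Q.BSet W v).Nonempty) :
    P v = ∑ μ ∈ hfin.toFinset, pathProd X μ * pathStar Y μ := by
  classical
  have hbound : ∀ μ ∈ Q.BSet W v, μ.length ≤ hfin.toFinset.sup List.length := by
    intro μ hμ
    exact Finset.le_sup (f := List.length) (hfin.mem_toFinset.2 hμ)
  exact Aux.key Q W hsing hcyc P X Y hfam _ v hfin hne hbound
end

section
/- Let Q be a quiver with finitely many vertices such that all singular vertices lie in Q'⁰ ⊆ Q⁰ and every cycle meets Q'⁰. Let Q' be the quiver with vertex set Q'⁰ and one edge e_μ for each path μ ∈ ⋃_{v∈Q'⁰} B_v, with s(e_μ) = s(μ) and r(e_μ) = r(μ). Then in the Leavitt path algebra L_k(Q), the assignments q_v = v for v ∈ Q'⁰ and T_{e_μ} = μ (the product of the edges of μ) form a Cuntz-Krieger Q'-family. -/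
namespace Qvr

/-- `μ` is a defining path for the Crisp–Gow reduction relative to `W`: a nonempty path
whose source and range lie in `W` and all of whose intermediate range vertices lie
outside `W`. -/
structure IsCGPath (Q : Qvr) (W : Set Q.V) (μ : List Q.E) : Prop where
  ne : μ ≠ []
  path : Q.IsPath μ
  src_mem : Q.pathSrc μ ne ∈ W
  rng_mem : Q.pathRng μ ne ∈ W
  mid : ∀ i : Fin μ.length, (i : ℕ) + 1 < μ.length → Q.r (μ.get i) ∉ W

/-- The Crisp–Gow reduction of `Q` relative to `W ⊆ Q⁰`: vertices are the elements of `W`,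
and there is one edge `e_μ` for every path `μ` of `Q` with source and range in `W` and all
intermediate range vertices outside `W`. -/
@[reducible] def CGred (Q : Qvr) (W : Set Q.V) : Qvr where
  V := {v : Q.V // v ∈ W}
  E := {μ : List Q.E // Q.IsCGPath W μ}
  s := fun μ => ⟨Q.pathSrc μ.1 μ.2.ne, μ.2.src_mem⟩
  r := fun μ => ⟨Q.pathRng μ.1 μ.2.ne, μ.2.rng_mem⟩

end Qvr

/-- Generators of the Leavitt path algebra: vertices, edges and ghost edges. -/
inductive LGen (Q : Qvr) : Type
  | vert : Q.V → LGen Q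
  | edge : Q.E → LGen Q
  | ghost : Q.E → LGen Q

/-- The canonical generators inside the free algebra. -/
def lgen (k : Type) [Field k] (Q : Qvr) (x : LGen Q) : FreeAlgebra k (LGen Q) :=
  FreeAlgebra.ι k x

/-- The defining relations of the Leavitt path algebra of a quiver with finitely many
vertices: the vertices are pairwise orthogonal idempotents summing to `1`, together with
the path algebra relations and the Cuntz–Krieger relations (CK-2 imposed at regular
vertices). -/
inductive LRel (k : Type) [Field k] (Q : Qvr) [Fintype Q.V] :
    FreeAlgebra k (LGen Q) → FreeAlgebra k (LGen Q) → Prop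
  | orth (v w : Q.V) (h : v ≠ w) :
      LRel k Q (lgen k Q (.vert v) * lgen k Q (.vert w)) 0
  | idem (v : Q.V) :
      LRel k Q (lgen k Q (.vert v) * lgen k Q (.vert v)) (lgen k Q (.vert v))
  | src_edge (e : Q.E) :
      LRel k Q (lgen k Q (.vert (Q.s e)) * lgen k Q (.edge e)) (lgen k Q (.edge e))
  | edge_rng (e : Q.E) :
      LRel k Q (lgen k Q (.edge e) * lgen k Q (.vert (Q.r e))) (lgen k Q (.edge e))
  | rng_ghost (e : Q.E) :
      LRel k Q (lgen k Q (.vert (Q.r e)) * lgen k Q (.ghost e)) (lgen k Q (.ghost e))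
  | ghost_src (e : Q.E) :
      LRel k Q (lgen k Q (.ghost e) * lgen k Q (.vert (Q.s e))) (lgen k Q (.ghost e))
  | ck1_eq (e : Q.E) :
      LRel k Q (lgen k Q (.ghost e) * lgen k Q (.edge e)) (lgen k Q (.vert (Q.r e)))
  | ck1_ne (e f : Q.E) (h : e ≠ f) :
      LRel k Q (lgen k Q (.ghost e) * lgen k Q (.edge f)) 0
  | ck2 (v : Q.V) (h : {e : Q.E | Q.s e = v}.Finite) (hne : {e : Q.E | Q.s e = v}.Nonempty) :
      LRel k Q (lgen k Q (.vert v)) (∑ e ∈ h.toFinset, lgen k Q (.edge e) * lgen k Q (.ghost e))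
  | unit : LRel k Q 1 (∑ v : Q.V, lgen k Q (.vert v))

/-- The Leavitt path algebra of `Q` with coefficients in `k`. -/
def LPA (k : Type) [Field k] (Q : Qvr) [Fintype Q.V] : Type :=
  RingQuot (LRel k Q)

noncomputable instance (k : Type) [Field k] (Q : Qvr) [Fintype Q.V] : Ring (LPA k Q) :=
  inferInstanceAs (Ring (RingQuot (LRel k Q)))

noncomputable instance (k : Type) [Field k] (Q : Qvr) [Fintype Q.V] : Algebra k (LPA k Q) :=
  inferInstanceAs (Algebra k (RingQuot (LRel k Q)))

/-- The vertex idempotent `v ∈ L_k(Q)`. -/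
noncomputable def lv (k : Type) [Field k] (Q : Qvr) [Fintype Q.V] (v : Q.V) : LPA k Q :=
  RingQuot.mkAlgHom k (LRel k Q) (lgen k Q (.vert v))

/-- The edge generator `e ∈ L_k(Q)`. -/
noncomputable def le (k : Type) [Field k] (Q : Qvr) [Fintype Q.V] (e : Q.E) : LPA k Q :=
  RingQuot.mkAlgHom k (LRel k Q) (lgen k Q (.edge e))

/-- The ghost edge generator `e* ∈ L_k(Q)`. -/
noncomputable def lg (k : Type) [Field k] (Q : Qvr) [Fintype Q.V] (e : Q.E) : LPA k Q :=
  RingQuot.mkAlgHom k (LRel k Q) (lgen k Q (.ghost e))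

/-! ### Auxiliary development -/

open Qvr

section AuxAlg

variable {k : Type} [Field k] {Q : Qvr} [Fintype Q.V] [DecidableEq Q.V] [DecidableEq Q.E]

private lemma lrel {a b : FreeAlgebra k (LGen Q)} (h : LRel k Q a b) :
    RingQuot.mkAlgHom k (LRel k Q) a = RingQuot.mkAlgHom k (LRel k Q) b :=
  RingQuot.mkAlgHom_rel k h

lemma lv_mul_lv (v w : Q.V) : lv k Q v * lv k Q w = if v = w then lv k Q v else 0 := by
  split_ifs with h
  · subst h; exact (map_mul _ _ _).symm.trans (lrel (LRel.idem v))
  · exact (map_mul _ _ _).symm.trans ((lrel (LRel.orth v w h)).trans (map_zero _))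

lemma lv_mul_le (e : Q.E) : lv k Q (Q.s e) * le k Q e = le k Q e := by
  exact (map_mul _ _ _).symm.trans (lrel (LRel.src_edge e))

lemma le_mul_lv (e : Q.E) : le k Q e * lv k Q (Q.r e) = le k Q e := by
  exact (map_mul _ _ _).symm.trans (lrel (LRel.edge_rng e))

lemma lv_mul_lg (e : Q.E) : lv k Q (Q.r e) * lg k Q e = lg k Q e := by
  exact (map_mul _ _ _).symm.trans (lrel (LRel.rng_ghost e))

lemma lg_mul_lv (e : Q.E) : lg k Q e * lv k Q (Q.s e) = lg k Q e := by
  exact (map_mul _ _ _).symm.trans (lrel (LRel.ghost_src e))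

lemma lg_mul_le (e f : Q.E) : lg k Q e * le k Q f = if e = f then lv k Q (Q.r e) else 0 := by
  split_ifs with h
  · subst h; exact (map_mul _ _ _).symm.trans (lrel (LRel.ck1_eq e))
  · exact (map_mul _ _ _).symm.trans ((lrel (LRel.ck1_ne e f h)).trans (map_zero _))

lemma lv_eq_sum (v : Q.V) (h : {e : Q.E | Q.s e = v}.Finite)
    (hne : {e : Q.E | Q.s e = v}.Nonempty) :
    lv k Q v = ∑ e ∈ h.toFinset, le k Q e * lg k Q e := by
  refine (lrel (LRel.ck2 v h hne)).trans ?_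
  refine (map_sum _ _ _).trans (Finset.sum_congr rfl fun e _ => map_mul _ _ _)

end AuxAlg

section AuxPath

variable {Q : Qvr} {A : Type} [Ring A]

lemma pathProd_nil (X : Q.E → A) : pathProd X [] = 1 := rfl

lemma pathProd_cons (X : Q.E → A) (e : Q.E) (μ : List Q.E) :
    pathProd X (e :: μ) = X e * pathProd X μ := by simp [pathProd]

lemma pathProd_append (X : Q.E → A) (μ ν : List Q.E) :
    pathProd X (μ ++ ν) = pathProd X μ * pathProd X ν := by simp [pathProd]

lemma pathStar_nil (Y : Q.E → A) : pathStar Y [] = 1 := rfl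

lemma pathStar_cons (Y : Q.E → A) (e : Q.E) (μ : List Q.E) :
    pathStar Y (e :: μ) = pathStar Y μ * Y e := by simp [pathStar]

lemma pathStar_append (Y : Q.E → A) (μ ν : List Q.E) :
    pathStar Y (μ ++ ν) = pathStar Y ν * pathStar Y μ := by simp [pathStar]

end AuxPath

/-- Optional-valued source of a path. -/
def srcO (Q : Qvr) (μ : List Q.E) : Option Q.V := (μ.map Q.s).head?

/-- Optional-valued range of a path. -/
def rngO (Q : Qvr) (μ : List Q.E) : Option Q.V := (μ.map Q.r).getLast?

section AuxO

variable {Q : Qvr}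

@[simp] lemma srcO_nil : srcO Q [] = none := rfl

@[simp] lemma srcO_cons (e : Q.E) (μ : List Q.E) : srcO Q (e :: μ) = some (Q.s e) := rfl

@[simp] lemma rngO_nil : rngO Q [] = none := rfl

@[simp] lemma rngO_singleton (e : Q.E) : rngO Q [e] = some (Q.r e) := rfl

lemma rngO_cons_cons (e f : Q.E) (μ : List Q.E) :
    rngO Q (e :: f :: μ) = rngO Q (f :: μ) := by
  simp [rngO]

lemma rngO_concat (μ : List Q.E) (e : Q.E) : rngO Q (μ ++ [e]) = some (Q.r e) := by
  simp [rngO]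

lemma srcO_eq_head (μ : List Q.E) (h : μ ≠ []) : srcO Q μ = some (Q.s (μ.head h)) := by
  cases μ with
  | nil => exact absurd rfl h
  | cons e t => simp

lemma rngO_eq_getLast (μ : List Q.E) (h : μ ≠ []) : rngO Q μ = some (Q.r (μ.getLast h)) := by
  rw [rngO, List.getLast?_eq_getLast_of_ne_nil (by simpa using h), ← List.getLast_map (f := Q.r)]

lemma srcO_eq_pathSrc (μ : List Q.E) (h : μ ≠ []) : srcO Q μ = some (Q.pathSrc μ h) :=
  srcO_eq_head μ h

lemma rngO_eq_pathRng (μ : List Q.E) (h : μ ≠ []) : rngO Q μ = some (Q.pathRng μ h) :=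
  rngO_eq_getLast μ h

lemma srcO_append_left (μ ν : List Q.E) (h : μ ≠ []) : srcO Q (μ ++ ν) = srcO Q μ := by
  cases μ with
  | nil => exact absurd rfl h
  | cons e t => simp

end AuxO

section AuxAbsorb

variable {k : Type} [Field k] {Q : Qvr} [Fintype Q.V] [DecidableEq Q.V] [DecidableEq Q.E]

lemma lv_mul_pathProd {μ : List Q.E} {v : Q.V} (h : srcO Q μ = some v) :
    lv k Q v * pathProd (le k Q) μ = pathProd (le k Q) μ := by
  cases μ with
  | nil => simp at h
  | cons e t =>
    simp only [srcO_cons, Option.some.injEq] at h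
    subst h
    rw [pathProd_cons, ← mul_assoc, lv_mul_le]

lemma pathStar_mul_lv {μ : List Q.E} {v : Q.V} (h : srcO Q μ = some v) :
    pathStar (lg k Q) μ * lv k Q v = pathStar (lg k Q) μ := by
  cases μ with
  | nil => simp at h
  | cons e t =>
    simp only [srcO_cons, Option.some.injEq] at h
    subst h
    rw [pathStar_cons, mul_assoc, lg_mul_lv]

lemma pathProd_mul_lv : ∀ {μ : List Q.E} {w : Q.V}, rngO Q μ = some w →
    pathProd (le k Q) μ * lv k Q w = pathProd (le k Q) μ
  | [], w => by simp
  | [e], w => by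
    intro h
    simp only [rngO_singleton, Option.some.injEq] at h
    subst h
    simp only [pathProd_cons, pathProd_nil, mul_one]
    exact le_mul_lv e
  | e :: f :: t, w => by
    intro h
    rw [rngO_cons_cons] at h
    rw [pathProd_cons, mul_assoc, pathProd_mul_lv h]

lemma lv_mul_pathStar : ∀ {μ : List Q.E} {w : Q.V}, rngO Q μ = some w →
    lv k Q w * pathStar (lg k Q) μ = pathStar (lg k Q) μ
  | [], w => by simp
  | [e], w => by
    intro h
    simp only [rngO_singleton, Option.some.injEq] at h
    subst h
    simp only [pathStar_cons, pathStar_nil, one_mul]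
    exact lv_mul_lg e
  | e :: f :: t, w => by
    intro h
    rw [rngO_cons_cons] at h
    rw [pathStar_cons, ← mul_assoc, lv_mul_pathStar h]

lemma ck1_aux (W : Set Q.V) : ∀ (μ ν : List Q.E) (w : Q.V), ν ≠ [] →
    Q.IsPath μ → Q.IsPath ν →
    (∀ e ∈ μ.dropLast, Q.r e ∉ W) → (∀ e ∈ ν.dropLast, Q.r e ∉ W) →
    rngO Q μ = some w → w ∈ W → (∀ u, rngO Q ν = some u → u ∈ W) →
    pathStar (lg k Q) μ * pathProd (le k Q) ν = if μ = ν then lv k Q w else 0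
  | [], ν, w => by simp
  | e :: μ', [], w => by intro hν; exact absurd rfl hν
  | e :: μ', f :: ν', w => by
    intro _ hpμ hpν hmidμ hmidν hrμ hwW hrν
    rw [pathStar_cons, pathProd_cons, mul_assoc, ← mul_assoc (lg k Q e), lg_mul_le]
    by_cases hef : e = f
    · subst hef
      rw [if_pos rfl]
      match μ', ν' with
      | [], [] =>
        simp only [rngO_singleton, Option.some.injEq] at hrμ
        subst hrμ
        simp [pathStar_nil, pathProd_nil]
      | [], g :: ν'' =>
        exfalso
        simp only [rngO_singleton, Option.some.injEq] at hrμ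
        subst hrμ
        exact hmidν e (by simp [List.dropLast_cons₂]) hwW
      | g :: μ'', [] =>
        exfalso
        have : Q.r e ∈ W := hrν _ (by simp)
        exact hmidμ e (by simp [List.dropLast_cons₂]) this
      | g :: μ'', h' :: ν'' =>
        have hsg : Q.s h' = Q.r e := by
          have := (List.isChain_cons_cons.1 hpν).1
          exact this.symm
        have habs : lv k Q (Q.r e) * pathProd (le k Q) (h' :: ν'') =
            pathProd (le k Q) (h' :: ν'') := by
          apply lv_mul_pathProd
          simp [hsg]
        rw [habs]
        rw [ck1_aux W (g :: μ'') (h' :: ν'') w (by simp) hpμ.tail hpν.tail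
          (fun x hx => hmidμ x (by simp only [List.dropLast_cons₂]; exact List.mem_cons_of_mem _ hx))
          (fun x hx => hmidν x (by simp only [List.dropLast_cons₂]; exact List.mem_cons_of_mem _ hx))
          (by rw [← rngO_cons_cons e]; exact hrμ) hwW
          (fun u hu => hrν u (by rw [rngO_cons_cons]; exact hu))]
        exact if_congr (by simp) rfl rfl
    · rw [if_neg hef, zero_mul, mul_zero, if_neg (by simp [hef])]

end AuxAbsorb

/-- Prefix-condition for the Crisp–Gow expansion: a nonempty path from `v` all of whose
non-final range vertices lie outside `W`. -/
structure PreP (Q : Qvr) (W : Set Q.V) (v : Q.V) (μ : List Q.E) : Prop where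
  ne : μ ≠ []
  path : Q.IsPath μ
  src : srcO Q μ = some v
  mid : ∀ e ∈ μ.dropLast, Q.r e ∉ W

section AuxComb

variable {Q : Qvr} {W : Set Q.V}

lemma cons_path {e : Q.E} {ν : List Q.E} (hνp : Q.IsPath ν) (hs : srcO Q ν = some (Q.r e)) :
    Q.IsPath (e :: ν) := by
  refine List.isChain_cons.2 ⟨?_, hνp⟩
  intro b hb
  rw [Option.mem_def] at hb
  rw [srcO, List.head?_map, hb] at hs
  simp only [Option.map_some, Option.some.injEq] at hs
  exact hs.symm

lemma seg_lemma {μ : List Q.E} (hp : Q.IsPath μ) (hnd : ¬ (μ.map Q.s).Nodup) :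
    ∃ ν, ν ≠ [] ∧ ν.length < μ.length ∧ (∀ e ∈ ν, e ∈ μ) ∧ Q.IsPath ν ∧
      rngO Q ν = srcO Q ν := by
  rw [List.nodup_iff_injective_get, Function.not_injective_iff] at hnd
  obtain ⟨a, b, hab, hne⟩ := hnd
  have hmap : (μ.map Q.s).length = μ.length := by simp
  -- turn into natural number indices i < j
  obtain ⟨i, j, hij, hjl, hss⟩ :
      ∃ i j, ∃ (_ : i < j) (hjl : j < μ.length), Q.s (μ[i]'(by omega)) = Q.s (μ[j]'hjl) := by
    rcases lt_or_gt_of_ne (fun h : a.1 = b.1 => hne (Fin.ext h)) with h | h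
    · exact ⟨a.1, b.1, h, by omega, by
        have := hab
        simp only [List.get_eq_getElem, List.getElem_map] at this
        exact this⟩
    · exact ⟨b.1, a.1, h, by omega, by
        have := hab.symm
        simp only [List.get_eq_getElem, List.getElem_map] at this
        exact this⟩
  refine ⟨(μ.drop i).take (j - i), ?_, ?_, ?_, ?_, ?_⟩
  case _ =>
    have : ((μ.drop i).take (j - i)).length = j - i := by
      simp only [List.length_take, List.length_drop]
      omega
    intro hcon
    rw [hcon] at this
    simp at this
    omega
  case _ =>
    simp only [List.length_take, List.length_drop]
    omega
  case _ =>
    intro e he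
    exact ((List.take_prefix _ _).isInfix.trans (List.drop_suffix _ _).isInfix).subset he
  case _ =>
    exact hp.infix ((List.take_prefix _ _).isInfix.trans (List.drop_suffix _ _).isInfix)
  case _ =>
    set ν := (μ.drop i).take (j - i) with hν
    have hνlen : ν.length = j - i := by
      simp only [hν, List.length_take, List.length_drop]; omega
    have h0 : ν ≠ [] := by
      intro hcon; rw [hcon] at hνlen; simp at hνlen; omega
    have hν0 : ν.head h0 = μ[i]'(by omega) := by
      rw [List.head_eq_getElem]
      simp only [hν, List.getElem_take, List.getElem_drop]
      simp
    have hνl : ν.getLast h0 = μ[j-1]'(by omega) := by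
      rw [List.getLast_eq_getElem]
      have hidx : i + (ν.length - 1) = j - 1 := by omega
      simp only [hν, List.getElem_take, List.getElem_drop]
      simp only [← hν, hidx]
    have hchain : Q.r (μ[j-1]'(by omega)) = Q.s (μ[j]'hjl) := by
      have := List.isChain_iff_getElem.1 hp (j-1) (by omega)
      have hidx : j - 1 + 1 = j := by omega
      simp only [hidx] at this
      exact this
    rw [rngO_eq_getLast ν h0, srcO_eq_head ν h0, hν0, hνl, hchain, hss]

lemma exists_cycle_meet (hcyc : Q.CyclesMeet W) :
    ∀ n (μ : List Q.E), μ.length ≤ n → μ ≠ [] → Q.IsPath μ → rngO Q μ = srcO Q μ →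
      ∃ e ∈ μ, Q.s e ∈ W := by
  intro n
  induction n with
  | zero =>
    intro μ hlen hne _ _
    exact absurd (List.length_eq_zero_iff.1 (Nat.le_zero.1 hlen)) hne
  | succ n ih =>
    intro μ hlen hne hp hcl
    by_cases hnd : (μ.map Q.s).Nodup
    · refine hcyc μ ⟨hne, hp, ?_, hnd⟩
      rw [rngO_eq_pathRng μ hne, srcO_eq_pathSrc μ hne] at hcl
      exact Option.some_inj.1 hcl
    · obtain ⟨ν, hν0, hνlt, hνmem, hνp, hνcl⟩ := seg_lemma hp hnd
      obtain ⟨e, he, hW⟩ := ih ν (by omega) hν0 hνp hνcl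
      exact ⟨e, hνmem e he, hW⟩

lemma avoid_length [Fintype Q.V] (hcyc : Q.CyclesMeet W) {μ : List Q.E} (hp : Q.IsPath μ)
    (hav : ∀ e ∈ μ, Q.s e ∉ W) : μ.length ≤ Fintype.card Q.V := by
  by_cases hnd : (μ.map Q.s).Nodup
  · have := hnd.length_le_card
    simpa using this
  · obtain ⟨ν, hν0, _, hνmem, hνp, hνcl⟩ := seg_lemma hp hnd
    obtain ⟨e, he, hW⟩ := exists_cycle_meet hcyc ν.length ν le_rfl hν0 hνp hνcl
    exact absurd hW (hav e (hνmem e he))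

lemma reach (hsing : ∀ v, v ∉ W → Q.IsRegular v) :
    ∀ n (u : Q.V), u ∉ W →
      (∀ μ : List Q.E, μ ≠ [] → Q.IsPath μ → srcO Q μ = some u → (∀ e ∈ μ, Q.s e ∉ W) →
        μ.length < n) →
      ∃ μ, μ ≠ [] ∧ Q.IsPath μ ∧ srcO Q μ = some u ∧ (∀ e ∈ μ, Q.s e ∉ W) ∧
        (∀ x ∈ μ.dropLast, Q.r x ∉ W) ∧ (∀ w, rngO Q μ = some w → w ∈ W) := by
  intro n
  induction n with
  | zero =>
    intro u hu hbd
    obtain ⟨e, he⟩ := (hsing u hu).1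
    have he' : Q.s e = u := he
    have := hbd [e] (by simp) (List.isChain_singleton e) (by simp [he'])
      (fun x hx => by simp at hx; subst hx; rw [he']; exact hu)
    simp at this
  | succ n ih =>
    intro u hu hbd
    obtain ⟨e, he⟩ := (hsing u hu).1
    have he' : Q.s e = u := he
    by_cases hr : Q.r e ∈ W
    · exact ⟨[e], by simp, List.isChain_singleton e, by simp [he'],
        (fun x hx => by simp at hx; subst hx; rw [he']; exact hu), by simp,
        fun w hw => by simp only [rngO_singleton, Option.some.injEq] at hw; subst hw; exact hr⟩
    · have hbd' : ∀ ν : List Q.E, ν ≠ [] → Q.IsPath ν → srcO Q ν = some (Q.r e) →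
          (∀ x ∈ ν, Q.s x ∉ W) → ν.length < n := by
        intro ν hν0 hνp hνs hνav
        have := hbd (e :: ν) (by simp) (cons_path hνp hνs) (by simp [he'])
          (fun x hx => by
            rcases List.mem_cons.1 hx with h | h
            · subst h; rw [he']; exact hu
            · exact hνav x h)
        simp at this
        omega
      obtain ⟨ν, hν0, hνp, hνs, hνav, hνmid, hνrng⟩ := ih (Q.r e) hr hbd'
      obtain ⟨b, t, rfl⟩ := List.exists_cons_of_ne_nil hν0
      refine ⟨e :: b :: t, by simp, cons_path hνp hνs, by simp [he'], ?_, ?_, ?_⟩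
      · intro x hx
        rcases List.mem_cons.1 hx with h | h
        · subst h; rw [he']; exact hu
        · exact hνav x h
      · intro x hx
        rw [List.dropLast_cons₂] at hx
        rcases List.mem_cons.1 hx with h | h
        · subst h; exact hr
        · exact hνmid x h
      · intro w hw
        rw [rngO_cons_cons] at hw
        exact hνrng w hw

lemma reach' [Fintype Q.V] (hsing : ∀ v, v ∉ W → Q.IsRegular v) (hcyc : Q.CyclesMeet W)
    (u : Q.V) (hu : u ∉ W) :
    ∃ μ, μ ≠ [] ∧ Q.IsPath μ ∧ srcO Q μ = some u ∧ (∀ e ∈ μ, Q.s e ∉ W) ∧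
      (∀ x ∈ μ.dropLast, Q.r x ∉ W) ∧ (∀ w, rngO Q μ = some w → w ∈ W) :=
  reach hsing (Fintype.card Q.V + 1) u hu
    (fun μ _ h2 _ h4 => Nat.lt_succ_of_le (avoid_length hcyc h2 h4))

lemma edge_cg [Fintype Q.V] (hsing : ∀ v, v ∉ W → Q.IsRegular v) (hcyc : Q.CyclesMeet W)
    (e : Q.E) :
    ∃ μ : List Q.E, μ ≠ [] ∧ Q.IsPath μ ∧ μ.head? = some e ∧
      (∀ x ∈ μ.dropLast, Q.r x ∉ W) ∧ (∀ w, rngO Q μ = some w → w ∈ W) := by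
  by_cases hr : Q.r e ∈ W
  · exact ⟨[e], by simp, List.isChain_singleton e, rfl, by simp,
      fun w hw => by simp only [rngO_singleton, Option.some.injEq] at hw; subst hw; exact hr⟩
  · obtain ⟨ν, hν0, hνp, hνs, _, hνmid, hνrng⟩ := reach' hsing hcyc (Q.r e) hr
    obtain ⟨b, t, rfl⟩ := List.exists_cons_of_ne_nil hν0
    refine ⟨e :: b :: t, by simp, cons_path hνp hνs, rfl, ?_, ?_⟩
    · intro x hx
      rw [List.dropLast_cons₂] at hx
      rcases List.mem_cons.1 hx with h | h
      · subst h; exact hr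
      · exact hνmid x h
    · intro w hw
      rw [rngO_cons_cons] at hw
      exact hνrng w hw

lemma pre_length [Fintype Q.V] (hcyc : Q.CyclesMeet W) {v : Q.V} {μ : List Q.E}
    (h : PreP Q W v μ) : μ.length ≤ Fintype.card Q.V + 1 := by
  obtain ⟨e, t, rfl⟩ := List.exists_cons_of_ne_nil h.ne
  have htav : ∀ x ∈ t, Q.s x ∉ W := by
    intro x hx
    obtain ⟨i, hi, rfl⟩ := List.mem_iff_getElem.1 hx
    have hchain := List.isChain_iff_getElem.1 h.path i (by simp; omega)
    simp only [List.get_eq_getElem, List.getElem_cons_succ] at hchain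
    rw [← hchain]
    apply h.mid
    have hd : (e :: t).dropLast[i]'(by simp; omega) = (e :: t)[i]'(by simp; omega) :=
      List.getElem_dropLast ..
    rw [← hd]
    exact List.getElem_mem _
  have := avoid_length hcyc h.path.tail htav
  simp only [List.tail_cons] at this
  simp only [List.length_cons]
  omega

lemma srcO_dropLast : ∀ {μ : List Q.E}, 2 ≤ μ.length → srcO Q μ.dropLast = srcO Q μ
  | [], h => by simp at h
  | [a], h => by simp at h
  | a :: b :: l, _ => by rw [List.dropLast_cons₂]; simp

lemma pre_decomp {v : Q.V} {μ : List Q.E} (h : PreP Q W v μ) (hlen : 2 ≤ μ.length) :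
    ∃ (μ' : List Q.E) (f : Q.E), μ = μ' ++ [f] ∧ PreP Q W v μ' ∧
      (∀ u, rngO Q μ' = some u → u ∉ W) ∧ rngO Q μ' = some (Q.s f) ∧
      μ'.length = μ.length - 1 := by
  have hdne : μ.dropLast ≠ [] := by
    intro hcon
    have := List.length_dropLast (xs := μ)
    rw [hcon] at this
    simp at this
    omega
  have hrd : rngO Q μ.dropLast = some (Q.r (μ.dropLast.getLast hdne)) :=
    rngO_eq_getLast _ hdne
  have hP : Q.IsPath (μ.dropLast ++ [μ.getLast h.ne]) := by
    rw [List.dropLast_append_getLast h.ne]; exact h.path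
  have hj := (List.isChain_append.1 hP).2.2
  have hjunc : Q.r (μ.dropLast.getLast hdne) = Q.s (μ.getLast h.ne) := by
    apply hj
    · rw [List.getLast?_eq_getLast_of_ne_nil hdne]; rfl
    · rfl
  refine ⟨μ.dropLast, μ.getLast h.ne, (List.dropLast_append_getLast h.ne).symm,
    ⟨hdne, h.path.dropLast, ?_, ?_⟩, ?_, ?_, by simp⟩
  · rw [srcO_dropLast hlen]; exact h.src
  · intro x hx
    exact h.mid x ((List.dropLast_sublist _).subset hx)
  · intro u hu
    rw [hrd] at hu
    have := Option.some_inj.1 hu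
    subst this
    exact h.mid _ (List.getLast_mem hdne)
  · rw [hrd, hjunc]

lemma pre_concat {v : Q.V} {μ' : List Q.E} {f : Q.E} (h : PreP Q W v μ')
    (hrng : ∀ u, rngO Q μ' = some u → u ∉ W) (hj : rngO Q μ' = some (Q.s f)) :
    PreP Q W v (μ' ++ [f]) := by
  have hrd : rngO Q μ' = some (Q.r (μ'.getLast h.ne)) := rngO_eq_getLast _ h.ne
  refine ⟨by simp, ?_, ?_, ?_⟩
  · refine List.IsChain.append h.path (List.isChain_singleton f) ?_
    intro x hx y hy
    rw [Option.mem_def, List.getLast?_eq_getLast_of_ne_nil h.ne] at hx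
    have hx' := Option.some_inj.1 hx
    simp only [List.head?_cons, Option.mem_def, Option.some.injEq] at hy
    subst hy
    rw [← hx']
    exact Option.some_inj.1 (hrd.symm.trans hj)
  · rw [srcO_append_left _ _ h.ne]; exact h.src
  · rw [List.dropLast_concat]
    intro x hx
    have hx' : x ∈ μ'.dropLast ∨ x = μ'.getLast h.ne := by
      have : x ∈ μ'.dropLast ++ [μ'.getLast h.ne] := by
        rw [List.dropLast_append_getLast h.ne]; exact hx
      rcases List.mem_append.1 this with h1 | h1
      · exact Or.inl h1
      · simp at h1; exact Or.inr h1
    rcases hx' with h1 | h1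
    · exact h.mid x h1
    · subst h1
      exact hrng _ hrd

end AuxComb

/-- Paths satisfying the prefix condition, of a given length. -/
def preSet (Q : Qvr) (W : Set Q.V) (v : Q.V) (n : ℕ) : Set (List Q.E) :=
  {μ | PreP Q W v μ ∧ μ.length = n}

section AuxFin

variable {Q : Qvr} {W : Set Q.V}

lemma rngO_of_ne {μ : List Q.E} (h : μ ≠ []) : ∃ u, rngO Q μ = some u :=
  ⟨_, rngO_eq_getLast μ h⟩

lemma preSet_finite (hsing : ∀ u, u ∉ W → Q.IsRegular u) {v : Q.V} (hreg : Q.IsRegular v) :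
    ∀ n, (preSet Q W v n).Finite
  | 0 => Set.Finite.subset Set.finite_empty (by
      rintro μ ⟨h, hl⟩
      exact absurd (List.length_eq_zero_iff.1 hl) h.ne)
  | 1 => Set.Finite.subset (hreg.2.image (fun e => [e])) (by
      rintro μ ⟨h, hl⟩
      obtain ⟨a, rfl⟩ := List.length_eq_one_iff.1 hl
      refine ⟨a, ?_, rfl⟩
      have := h.src
      simp only [srcO_cons, Option.some.injEq] at this
      exact this)
  | (n+2) => by
    have hprev := preSet_finite hsing hreg (n+1)
    have hS' : ({μ' ∈ preSet Q W v (n+1) | ∀ u, rngO Q μ' = some u → u ∉ W}).Finite :=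
      hprev.subset (Set.sep_subset _ _)
    have hbig : (⋃ μ' ∈ {μ' ∈ preSet Q W v (n+1) | ∀ u, rngO Q μ' = some u → u ∉ W},
        (fun f => μ' ++ [f]) '' {f | rngO Q μ' = some (Q.s f)}).Finite := by
      refine hS'.biUnion ?_
      intro μ' hμ'
      refine Set.Finite.image _ ?_
      obtain ⟨u, hu⟩ := rngO_of_ne hμ'.1.1.ne
      have hureg : Q.IsRegular u := hsing u (hμ'.2 u hu)
      refine hureg.2.subset ?_
      intro f hf
      rw [hu] at hf
      exact (Option.some_inj.1 hf).symm
    refine hbig.subset ?_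
    intro μ hμ
    obtain ⟨hμp, hμl⟩ := hμ
    obtain ⟨μ', f, rfl, hμ'pre, hμ'rng, hμ'j, hμ'len⟩ :=
      pre_decomp hμp (by rw [hμl]; omega)
    have hl : μ'.length = n + 1 := by
      simp only [List.length_append, List.length_singleton] at hμl
      omega
    exact Set.mem_biUnion (⟨⟨hμ'pre, hl⟩, hμ'rng⟩ : _) ⟨f, hμ'j, rfl⟩

end AuxFin


/-- The set of Crisp–Gow defining paths from `v` (as lists). -/
def bSet (Q : Qvr) (W : Set Q.V) (v : Q.V) : Set (List Q.E) :=
  {μ | PreP Q W v μ ∧ ∀ u, rngO Q μ = some u → u ∈ W}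

/-- Prefix paths of length `n` whose range is outside `W`. -/
def sSet (Q : Qvr) (W : Set Q.V) (v : Q.V) (n : ℕ) : Set (List Q.E) :=
  {μ | (PreP Q W v μ ∧ μ.length = n) ∧ ∀ u, rngO Q μ = some u → u ∉ W}

/-- Crisp–Gow paths of length at most `n`. -/
def bLev (Q : Qvr) (W : Set Q.V) (v : Q.V) (n : ℕ) : Set (List Q.E) :=
  bSet Q W v ∩ {μ | μ.length ≤ n}

/-- Crisp–Gow paths of length exactly `n`. -/
def bEx (Q : Qvr) (W : Set Q.V) (v : Q.V) (n : ℕ) : Set (List Q.E) :=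
  bSet Q W v ∩ {μ | μ.length = n}

section AuxCG

variable {Q : Qvr} {W : Set Q.V}

lemma mid_of_cg {μ : List Q.E} (h : Q.IsCGPath W μ) : ∀ e ∈ μ.dropLast, Q.r e ∉ W := by
  intro e he
  obtain ⟨i, hi, rfl⟩ := List.mem_iff_getElem.1 he
  have hi' : i < μ.length - 1 := by simpa using hi
  have hd : μ.dropLast[i]'hi = μ[i]'(by omega) := List.getElem_dropLast ..
  rw [hd]
  have := h.mid ⟨i, by omega⟩ (by simpa using (by omega : i + 1 < μ.length))
  simpa using this

lemma cg_of_pre {v : Q.V} {μ : List Q.E} (h : PreP Q W v μ)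
    (hrng : ∀ u, rngO Q μ = some u → u ∈ W) (hv : v ∈ W) : Q.IsCGPath W μ := by
  refine ⟨h.ne, h.path, ?_, ?_, ?_⟩
  · have hs := h.src
    rw [srcO_eq_pathSrc μ h.ne] at hs
    rw [Option.some_inj.1 hs]
    exact hv
  · exact hrng _ (rngO_eq_pathRng μ h.ne)
  · intro i hi1
    apply h.mid
    have heq : μ.dropLast[i.1]'(by simp; omega) = μ[i.1]'(by omega) := List.getElem_dropLast ..
    have hmem : μ.dropLast[i.1]'(by simp; omega) ∈ μ.dropLast := List.getElem_mem _
    rw [heq] at hmem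
    simpa [List.get_eq_getElem] using hmem

lemma pathSrc_of_pre {v : Q.V} {μ : List Q.E} (h : PreP Q W v μ) :
    Q.pathSrc μ h.ne = v := by
  have hs := h.src
  rw [srcO_eq_pathSrc μ h.ne] at hs
  exact Option.some_inj.1 hs

end AuxCG

section AuxCK2

variable {k : Type} [Field k] {Q : Qvr} [Fintype Q.V] [DecidableEq Q.V] [DecidableEq Q.E]
  {W : Set Q.V}

open scoped Classical in
/-- The finishing edges of a prefix path. -/
noncomputable def eFin (Q : Qvr) (μ : List Q.E) : Finset Q.E :=
  if h : ({f | rngO Q μ = some (Q.s f)}).Finite then h.toFinset else ∅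

lemma ck2_main (hsing : ∀ u, u ∉ W → Q.IsRegular u) (hcyc : Q.CyclesMeet W)
    {v : Q.V} (hreg : Q.IsRegular v) (hfb : (bSet Q W v).Finite) :
    lv k Q v = ∑ μ ∈ hfb.toFinset, pathProd (le k Q) μ * pathStar (lg k Q) μ := by
  classical
  have hpfin : ∀ n, (preSet Q W v n).Finite := preSet_finite hsing hreg
  have hsfin : ∀ n, (sSet Q W v n).Finite := fun n => (hpfin n).subset (fun μ hμ => hμ.1)
  have hbfin : ∀ n, (bLev Q W v n).Finite := fun n => hfb.subset Set.inter_subset_left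
  have hefin : ∀ n, (bEx Q W v n).Finite := fun n => hfb.subset Set.inter_subset_left
  -- splitting of prefix paths by whether the range lies in W
  have hsplit : ∀ n, (hpfin n).toFinset = (hefin n).toFinset ∪ (hsfin n).toFinset := by
    intro n
    ext μ
    simp only [Set.Finite.mem_toFinset, Finset.mem_union]
    constructor
    · rintro ⟨h1, h2⟩
      obtain ⟨u, hu⟩ := rngO_of_ne h1.ne
      by_cases huW : u ∈ W
      · exact Or.inl ⟨⟨h1, fun u' hu' => by rw [hu] at hu'; rwa [← Option.some_inj.1 hu']⟩, h2⟩
      · exact Or.inr ⟨⟨h1, h2⟩, fun u' hu' => by rw [hu] at hu'; rwa [← Option.some_inj.1 hu']⟩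
    · rintro (⟨⟨h1, _⟩, h2⟩ | ⟨⟨h1, h2⟩, _⟩)
      · exact ⟨h1, h2⟩
      · exact ⟨h1, h2⟩
  have hdisj : ∀ n, Disjoint ((hefin n).toFinset) ((hsfin n).toFinset) := by
    intro n
    rw [Finset.disjoint_left]
    intro μ hμ1 hμ2
    simp only [Set.Finite.mem_toFinset] at hμ1 hμ2
    obtain ⟨u, hu⟩ := rngO_of_ne hμ1.1.1.ne
    exact (hμ2.2 u hu) (hμ1.1.2 u hu)
  -- the level sets
  have hlev : ∀ n, (hbfin (n+1)).toFinset = (hbfin n).toFinset ∪ (hefin (n+1)).toFinset := by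
    intro n
    ext μ
    simp only [Set.Finite.mem_toFinset, Finset.mem_union]
    constructor
    · rintro ⟨h1, h2⟩
      rcases Nat.lt_or_ge μ.length (n+1) with h | h
      · exact Or.inl ⟨h1, by simp only [Set.mem_setOf_eq] at h2 ⊢; omega⟩
      · exact Or.inr ⟨h1, by simp only [Set.mem_setOf_eq] at h2 ⊢; omega⟩
    · rintro (⟨h1, h2⟩ | ⟨h1, h2⟩)
      · exact ⟨h1, by simp only [Set.mem_setOf_eq] at h2 ⊢; omega⟩
      · exact ⟨h1, by simp only [Set.mem_setOf_eq] at h2 ⊢; omega⟩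
  have hlevdisj : ∀ n, Disjoint ((hbfin n).toFinset) ((hefin (n+1)).toFinset) := by
    intro n
    rw [Finset.disjoint_left]
    intro μ hμ1 hμ2
    simp only [Set.Finite.mem_toFinset] at hμ1 hμ2
    have h1 := hμ1.2
    have h2 := hμ2.2
    simp only [Set.mem_setOf_eq] at h1 h2
    omega
  -- level 1
  have hbase1 : (hbfin 1).toFinset = (hefin 1).toFinset := by
    ext μ
    simp only [Set.Finite.mem_toFinset]
    constructor
    · rintro ⟨h1, h2⟩
      simp only [Set.mem_setOf_eq] at h2
      have := List.length_pos_iff.2 h1.1.ne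
      exact ⟨h1, by simp only [Set.mem_setOf_eq]; omega⟩
    · rintro ⟨h1, h2⟩
      simp only [Set.mem_setOf_eq] at h2
      exact ⟨h1, by simp only [Set.mem_setOf_eq]; omega⟩
  -- sum over paths of length one
  have hone : ∑ μ ∈ (hpfin 1).toFinset, pathProd (le k Q) μ * pathStar (lg k Q) μ
      = lv k Q v := by
    have himg : (hpfin 1).toFinset = hreg.2.toFinset.image (fun e => [e]) := by
      ext μ
      simp only [Set.Finite.mem_toFinset, Finset.mem_image]
      constructor
      · rintro ⟨h1, hl⟩
        obtain ⟨a, rfl⟩ := List.length_eq_one_iff.1 hl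
        have hs := h1.src
        simp only [srcO_cons, Option.some.injEq] at hs
        exact ⟨a, by simpa [Set.Finite.mem_toFinset] using hs, rfl⟩
      · rintro ⟨e, he, rfl⟩
        simp only [Set.Finite.mem_toFinset, Set.mem_setOf_eq] at he
        exact ⟨⟨by simp, List.isChain_singleton e, by simp [he], by simp⟩, rfl⟩
    rw [himg, Finset.sum_image (fun a _ b _ hab => by simpa using hab)]
    rw [lv_eq_sum v hreg.2 hreg.1]
    refine Finset.sum_congr rfl ?_
    intro e _
    simp [pathProd_cons, pathStar_cons, pathProd_nil, pathStar_nil]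
  -- expansion step
  have hstep : ∀ m, 1 ≤ m →
      ∑ μ ∈ (hsfin m).toFinset, pathProd (le k Q) μ * pathStar (lg k Q) μ
        = ∑ ν ∈ (hpfin (m+1)).toFinset, pathProd (le k Q) ν * pathStar (lg k Q) ν := by
    intro m hm
    -- finiteness of the finishing edges of each element of sSet
    have heF : ∀ μ ∈ (hsfin m).toFinset, ∃ u, rngO Q μ = some u ∧ u ∉ W ∧ Q.IsRegular u ∧
        (eFin Q μ : Set Q.E) = {f | Q.s f = u} := by
      intro μ hμ
      simp only [Set.Finite.mem_toFinset] at hμ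
      obtain ⟨u, hu⟩ := rngO_of_ne hμ.1.1.ne
      have huW : u ∉ W := hμ.2 u hu
      have hureg := hsing u huW
      have hset : {f | rngO Q μ = some (Q.s f)} = {f | Q.s f = u} := by
        ext f
        simp only [Set.mem_setOf_eq, hu, Option.some.injEq]
        exact ⟨fun h => h.symm, fun h => h.symm⟩
      have hfin : ({f | rngO Q μ = some (Q.s f)}).Finite := by rw [hset]; exact hureg.2
      refine ⟨u, hu, huW, hureg, ?_⟩
      rw [eFin, dif_pos hfin]
      rw [Set.Finite.coe_toFinset, hset]
    -- the biUnion description of prefix paths of length m+1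
    have hbU : (hpfin (m+1)).toFinset =
        (hsfin m).toFinset.biUnion (fun μ => (eFin Q μ).image (fun f => μ ++ [f])) := by
      ext ν
      simp only [Set.Finite.mem_toFinset, Finset.mem_biUnion, Finset.mem_image]
      constructor
      · rintro ⟨h1, hl⟩
        obtain ⟨μ', f, rfl, hpre, hrng, hj, hlen⟩ := pre_decomp h1 (by omega)
        have hl' : μ'.length = m := by
          simp only [List.length_append, List.length_singleton] at hl
          omega
        have hμ'mem : μ' ∈ (hsfin m).toFinset := by
          simp only [Set.Finite.mem_toFinset]
          exact ⟨⟨hpre, hl'⟩, hrng⟩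
        refine ⟨μ', by simpa only [Set.Finite.mem_toFinset] using hμ'mem, f, ?_, rfl⟩
        obtain ⟨u, hu, huW, hureg, hcoe⟩ := heF μ' hμ'mem
        have : f ∈ (eFin Q μ' : Set Q.E) := by
          rw [hcoe]
          simp only [Set.mem_setOf_eq]
          rw [hj] at hu
          exact Option.some_inj.1 hu
        exact this
      · rintro ⟨μ', hμ', f, hf, rfl⟩
        have hμ'mem : μ' ∈ (hsfin m).toFinset := by
          simp only [Set.Finite.mem_toFinset]; exact hμ'
        obtain ⟨u, hu, huW, hureg, hcoe⟩ := heF μ' hμ'mem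
        have hf' : Q.s f = u := by
          have : f ∈ (eFin Q μ' : Set Q.E) := hf
          rw [hcoe] at this
          exact this
        have hj : rngO Q μ' = some (Q.s f) := by rw [hu, hf']
        refine ⟨pre_concat hμ'.1.1 hμ'.2 hj, ?_⟩
        simp only [List.length_append, List.length_singleton, hμ'.1.2]
    -- pairwise disjointness
    have hpd : ((hsfin m).toFinset : Set (List Q.E)).PairwiseDisjoint
        (fun μ => (eFin Q μ).image (fun f => μ ++ [f])) := by
      intro μ1 _ μ2 _ hne12
      simp only [Function.onFun]
      rw [Finset.disjoint_left]
      rintro ν hν1 hν2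
      simp only [Finset.mem_image] at hν1 hν2
      obtain ⟨f1, _, rfl⟩ := hν1
      obtain ⟨f2, _, heq⟩ := hν2
      have := congrArg List.dropLast heq
      rw [List.dropLast_concat, List.dropLast_concat] at this
      exact hne12 this.symm
    rw [hbU, Finset.sum_biUnion hpd]
    refine Finset.sum_congr rfl ?_
    intro μ hμ
    rw [Finset.sum_image (fun a _ b _ hab => by
      have := congrArg (fun l => l.getLast?) hab
      simpa [List.getLast?_concat] using this)]
    obtain ⟨u, hu, huW, hureg, hcoe⟩ := heF μ hμ
    have h1 : pathProd (le k Q) μ * pathStar (lg k Q) μ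
        = pathProd (le k Q) μ * lv k Q u * pathStar (lg k Q) μ := by
      rw [pathProd_mul_lv hu]
    rw [h1, lv_eq_sum u hureg.2 hureg.1, Finset.mul_sum, Finset.sum_mul]
    have hFeq : eFin Q μ = hureg.2.toFinset := by
      apply Finset.coe_injective
      rw [hcoe, Set.Finite.coe_toFinset]
    rw [hFeq]
    refine Finset.sum_congr rfl ?_
    intro f _
    simp [pathProd_append, pathStar_append, pathProd_cons, pathStar_cons, pathProd_nil,
      pathStar_nil, mul_assoc]
  -- the main induction
  have key : ∀ n, lv k Q v =
      (∑ μ ∈ (hbfin (n+1)).toFinset, pathProd (le k Q) μ * pathStar (lg k Q) μ) +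
      (∑ μ ∈ (hsfin (n+1)).toFinset, pathProd (le k Q) μ * pathStar (lg k Q) μ) := by
    intro n
    induction n with
    | zero =>
      rw [hbase1, ← Finset.sum_union (hdisj 1), ← hsplit 1, hone]
    | succ n ih =>
      rw [ih, hstep (n+1) (by omega), hsplit (n+2), Finset.sum_union (hdisj (n+2)),
        hlev (n+1), Finset.sum_union (hlevdisj (n+1)), add_assoc]
  -- conclusion at a level beyond the length bound
  have hN := key (Fintype.card Q.V + 1)
  have hs0 : (hsfin (Fintype.card Q.V + 2)).toFinset = ∅ := by
    ext μ
    simp only [Set.Finite.mem_toFinset, Finset.notMem_empty, iff_false]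
    rintro ⟨⟨h1, h2⟩, _⟩
    have := pre_length hcyc h1
    omega
  have hb : (hbfin (Fintype.card Q.V + 2)).toFinset = hfb.toFinset := by
    ext μ
    simp only [Set.Finite.mem_toFinset]
    constructor
    · rintro ⟨h1, _⟩; exact h1
    · intro h1
      refine ⟨h1, ?_⟩
      have := pre_length hcyc h1.1
      simp only [Set.mem_setOf_eq]
      omega
  rw [hs0, hb, Finset.sum_empty, add_zero] at hN
  exact hN

end AuxCK2

/-- Under the hypotheses of the main theorem (finitely many vertices, all
singular vertices in `W`, every cycle meets `W`), the assignments `q_v = v` for `v ∈ W` and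
`T_{e_μ} = μ` (the product in `L_k(Q)` of the edges of `μ`) form a Cuntz–Krieger
`Q'`-family in `L_k(Q)`, where `Q'` is the Crisp–Gow reduction of `Q` relative to `W`. -/
theorem stmt4 (k : Type) [Field k] (Q : Qvr) [Fintype Q.V] [DecidableEq Q.V] [DecidableEq Q.E]
    (W : Set Q.V) (hsing : ∀ v : Q.V, v ∉ W → Q.IsRegular v) (hcyc : Q.CyclesMeet W) :
    IsQFamily (Qvr.CGred Q W)
      (fun v => lv k Q v.1)
      (fun μ => pathProd (le k Q) μ.1)
      (fun μ => pathStar (lg k Q) μ.1) := by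
  refine ⟨?_, ?_, ?_, ?_, ?_, ?_, ?_⟩
  · intro v w
    rw [lv_mul_lv]
    exact if_congr (Iff.symm Subtype.ext_iff) rfl rfl
  · intro μe
    exact lv_mul_pathProd (srcO_eq_pathSrc μe.1 μe.2.ne)
  · intro μe
    exact pathProd_mul_lv (rngO_eq_pathRng μe.1 μe.2.ne)
  · intro μe
    exact lv_mul_pathStar (rngO_eq_pathRng μe.1 μe.2.ne)
  · intro μe
    exact pathStar_mul_lv (srcO_eq_pathSrc μe.1 μe.2.ne)
  · intro μe νe
    rw [ck1_aux W μe.1 νe.1 (Q.pathRng μe.1 μe.2.ne) νe.2.ne μe.2.path νe.2.path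
      (mid_of_cg μe.2) (mid_of_cg νe.2) (rngO_eq_pathRng _ μe.2.ne) μe.2.rng_mem
      (fun u hu => by
        rw [rngO_eq_pathRng _ νe.2.ne] at hu
        exact Option.some_inj.1 hu ▸ νe.2.rng_mem)]
    exact if_congr (Iff.symm Subtype.ext_iff) rfl rfl
  · intro v h hne
    have hsrcval : ∀ (μe : (CGred Q W).E), (CGred Q W).s μe = v →
        Q.pathSrc μe.1 μe.2.ne = v.1 :=
      fun μe hμe => congrArg Subtype.val hμe
    have hreg : Q.IsRegular v.1 := by
      constructor
      · obtain ⟨μe, hμe⟩ := hne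
        exact ⟨μe.1.head μe.2.ne, hsrcval μe hμe⟩
      · have hsub : Finite ↥{μe : (CGred Q W).E | (CGred Q W).s μe = v} := h.to_subtype
        have hmk : ∀ e : ↥{e : Q.E | Q.s e = v.1},
            ∃ μe : ↥{μe : (CGred Q W).E | (CGred Q W).s μe = v}, μe.1.1.head? = some e.1 := by
          intro e
          obtain ⟨μ, h1, h2, h3, h4, h5⟩ := edge_cg hsing hcyc (W := W) e.1
          have hhead : μ.head h1 = e.1 := by
            have hh := List.head?_eq_head h1
            rw [hh] at h3
            exact Option.some_inj.1 h3
          have hpre : PreP Q W v.1 μ :=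
            ⟨h1, h2, by rw [srcO_eq_head μ h1, hhead]; exact congrArg some e.2, h4⟩
          have hcg : Q.IsCGPath W μ := cg_of_pre hpre h5 v.2
          refine ⟨⟨⟨μ, hcg⟩, Subtype.ext (pathSrc_of_pre hpre)⟩, ?_⟩
          rw [List.head?_eq_head h1, hhead]
        choose F hF using hmk
        have hfin2 : Finite ↥{e : Q.E | Q.s e = v.1} :=
          Finite.of_injective F (fun a b hab => Subtype.ext (Option.some_inj.1
            ((hF a).symm.trans (by rw [hab]; exact hF b))))
        exact Set.finite_coe_iff.mp hfin2
    have hfb : (bSet Q W v.1).Finite := by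
      refine ((Set.finite_Iic (Fintype.card Q.V + 1)).biUnion
        (fun m _ => preSet_finite hsing hreg m)).subset ?_
      intro μ hμ
      exact Set.mem_biUnion (Set.mem_Iic.2 (pre_length hcyc hμ.1)) ⟨hμ.1, rfl⟩
    show lv k Q v.1 = _
    rw [ck2_main hsing hcyc hreg hfb]
    refine (Finset.sum_bij (fun (μe : (CGred Q W).E) (_ : μe ∈ h.toFinset) => μe.1)
      ?_ ?_ ?_ ?_).symm
    · intro μe hμe
      simp only [Set.Finite.mem_toFinset] at hμe ⊢
      refine ⟨⟨μe.2.ne, μe.2.path, ?_, mid_of_cg μe.2⟩, ?_⟩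
      · rw [srcO_eq_pathSrc μe.1 μe.2.ne]
        exact congrArg some (hsrcval μe hμe)
      · intro u hu
        rw [rngO_eq_pathRng _ μe.2.ne] at hu
        exact Option.some_inj.1 hu ▸ μe.2.rng_mem
    · intro a ha b hb hab
      exact Subtype.ext hab
    · intro μ hμ
      simp only [Set.Finite.mem_toFinset] at hμ
      have hcg : Q.IsCGPath W μ := cg_of_pre hμ.1 hμ.2 v.2
      refine ⟨⟨μ, hcg⟩, ?_, rfl⟩
      simp only [Set.Finite.mem_toFinset]
      exact Subtype.ext (pathSrc_of_pre hμ.1)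
    · intro a ha
      rfl
end

section
/- Let Q be a quiver with finitely many vertices such that all singular vertices lie in Q'⁰ ⊆ Q⁰ and every cycle of Q meets Q'⁰. Then Q⁰ equals the hereditary saturated closure of Q'⁰. -/
namespace Qvr

/-- `v ≥ w`: there is a (possibly trivial) path from `v` to `w`. -/
def Reaches (Q : Qvr) (v w : Q.V) : Prop :=
  v = w ∨ ∃ (μ : List Q.E) (h : μ ≠ []), Q.IsPath μ ∧ Q.pathSrc μ h = v ∧ Q.pathRng μ h = w

/-- A set of vertices is hereditary if it is closed under reachability. -/
def Hereditary (Q : Qvr) (H : Set Q.V) : Prop :=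
  ∀ v ∈ H, ∀ w : Q.V, Q.Reaches v w → w ∈ H

/-- A set of vertices is saturated if it contains every regular vertex all of whose
out-neighbours lie in it. -/
def Saturated (Q : Qvr) (H : Set Q.V) : Prop :=
  ∀ v : Q.V, Q.IsRegular v → (∀ e : Q.E, Q.s e = v → Q.r e ∈ H) → v ∈ H

/-- The hereditary saturated closure of a set of vertices: the smallest hereditary and
saturated subset containing it. -/
def hsClosure (Q : Qvr) (X : Set Q.V) : Set Q.V :=
  ⋂₀ {H : Set Q.V | Q.Hereditary H ∧ Q.Saturated H ∧ X ⊆ H}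

end Qvr

/-- If `Q` has finitely many vertices, all singular vertices lie in `W`,
and every cycle of `Q` meets `W`, then `Q⁰` equals the hereditary saturated closure of `W`. -/
theorem stmt5 (Q : Qvr) [Fintype Q.V] (W : Set Q.V)
    (hsing : ∀ v : Q.V, v ∉ W → Q.IsRegular v) (hcyc : Q.CyclesMeet W) :
    Q.hsClosure W = Set.univ := by
  set H := Q.hsClosure W with hHdef
  have hWH : W ⊆ H := fun w hw => Set.mem_sInter.2 fun S hS => hS.2.2 hw
  have hHsat : Q.Saturated H := fun v hreg hall => Set.mem_sInter.2 fun S hS =>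
    hS.2.1 v hreg (fun e he => Set.mem_sInter.1 (hall e he) S hS)
  ext v
  simp only [Set.mem_univ, iff_true]
  by_contra hv
  -- every vertex outside H emits an edge whose range is outside H
  have key : ∀ v : Q.V, v ∉ H → ∃ e, Q.s e = v ∧ Q.r e ∉ H := by
    intro v hv
    have hreg : Q.IsRegular v := hsing v (fun hw => hv (hWH hw))
    by_contra hno
    push_neg at hno
    exact hv (hHsat v hreg hno)
  choose f hf1 hf2 using key
  let g : {v // v ∉ H} → {v // v ∉ H} := fun p => ⟨Q.r (f p.1 p.2), hf2 p.1 p.2⟩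
  let vs : ℕ → {v // v ∉ H} := fun n => g^[n] ⟨v, hv⟩
  let u : ℕ → Q.V := fun n => (vs n).1
  let es : ℕ → Q.E := fun n => f (vs n).1 (vs n).2
  have hu : ∀ n, u n ∉ H := fun n => (vs n).2
  have hes : ∀ n, Q.s (es n) = u n := fun n => hf1 _ _
  have her : ∀ n, Q.r (es n) = u (n + 1) := by
    intro n
    show Q.r (es n) = (g^[n+1] ⟨v, hv⟩).1
    rw [Function.iterate_succ_apply']
  -- find a repetition
  have : ∃ a b : ℕ, a ≠ b ∧ u a = u b := by
    have := Finite.exists_ne_map_eq_of_infinite u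
    obtain ⟨a, b, h1, h2⟩ := this
    exact ⟨a, b, h1, h2⟩
  obtain ⟨a, b, hab, huab⟩ := this
  have hP : ∃ j, ∃ i, i < j ∧ u i = u j := by
    rcases lt_or_gt_of_ne hab with h | h
    · exact ⟨b, a, h, huab⟩
    · exact ⟨a, b, h, huab.symm⟩
  classical
  let N := Nat.find hP
  obtain ⟨i, hiN, huiN⟩ : ∃ i, i < N ∧ u i = u N := Nat.find_spec hP
  have hdist : ∀ a b, a < b → b < N → u a ≠ u b := by
    intro a b hab hbN heq
    have h1 : N ≤ b := Nat.find_le (⟨a, hab, heq⟩ : ∃ i, i < b ∧ u i = u b)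
    omega
  set L := N - i with hL
  have hL0 : 0 < L := by omega
  let μ : List Q.E := (List.range L).map (fun k => es (i + k))
  have hμlen : μ.length = L := by simp [μ]
  have hμne : μ ≠ [] := by
    intro h
    rw [← List.length_eq_zero_iff] at h
    omega
  have hget : ∀ (k : ℕ) (h : k < μ.length), μ.get ⟨k, h⟩ = es (i + k) := by
    intro k h
    simp [μ]
  have hpath : Q.IsPath μ := by
    unfold Qvr.IsPath List.Chain'
    rw [List.isChain_iff_getElem]
    intro k hk
    have h1 := hget k (by omega)
    have h2 := hget (k + 1) hk
    simp only [List.get_eq_getElem] at h1 h2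
    rw [h1, h2, her, hes, Nat.add_assoc]
  have hhead : μ.head hμne = es i := by
    have h0 : 0 < μ.length := by omega
    have h := hget 0 h0
    rwa [List.get_mk_zero, Nat.add_zero] at h
  have hgetE : ∀ (k : ℕ) (h : k < μ.length), μ[k] = es (i + k) := by
    intro k h
    simp [μ]
  have hlast : μ.getLast hμne = es (i + (L - 1)) := by
    rw [List.getLast_eq_getElem, hgetE]
    congr 1
    omega
  have hsrc : Q.pathSrc μ hμne = u i := by
    rw [Qvr.pathSrc, hhead, hes]
  have hrng : Q.pathRng μ hμne = u i := by
    rw [Qvr.pathRng, hlast, her]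
    have : i + (L - 1) + 1 = N := by omega
    rw [this, ← huiN]
  have hnodup : (μ.map Q.s).Nodup := by
    have : μ.map Q.s = (List.range L).map (fun k => u (i + k)) := by
      simp only [μ, List.map_map]
      exact List.map_congr_left fun k _ => hes (i + k)
    rw [this]
    apply List.Nodup.map_on _ (List.nodup_range (n := L))
    intro x hx y hy hxy
    rw [List.mem_range] at hx hy
    by_contra hne
    rcases lt_or_gt_of_ne hne with h | h
    · exact hdist (i + x) (i + y) (by omega) (by omega) hxy
    · exact hdist (i + y) (i + x) (by omega) (by omega) hxy.symm
  have hcycle : Q.IsCycle μ := ⟨hμne, hpath, hrng.trans hsrc.symm, hnodup⟩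
  obtain ⟨e, heμ, heW⟩ := hcyc μ hcycle
  simp only [μ, List.mem_map, List.mem_range] at heμ
  obtain ⟨k, -, rfl⟩ := heμ
  rw [hes] at heW
  exact hu (i + k) (hWH heW)
end

section
/- Let X ⊆ Q⁰ for a quiver Q. Define Λ₀(X) = T(X) (the set of all vertices reachable from X by paths) and Λₙ(X) = {y ∈ Q⁰ : s⁻¹(y) ≠ ∅, r(s⁻¹(y)) ⊆ Λₙ₋₁(X)} ∪ Λₙ₋₁(X) for n ≥ 1, where only regular vertices y are added. Then ⋃_{n=0}^∞ Λₙ(X) is the hereditary saturated closure of X, i.e., the smallest hereditary and saturated subset of Q⁰ containing X. -/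
namespace Qvr

/-- The tower `Λₙ(X)`: `Λ₀(X) = T(X)` is the set of vertices reachable from `X`, and
`Λₙ₊₁(X)` adds those regular vertices all of whose out-neighbours lie in `Λₙ(X)`. -/
def Lam (Q : Qvr) (X : Set Q.V) : ℕ → Set Q.V
  | 0 => {w | ∃ v ∈ X, Q.Reaches v w}
  | n + 1 => {y | Q.IsRegular y ∧ ∀ e : Q.E, Q.s e = y → Q.r e ∈ Q.Lam X n} ∪ Q.Lam X n

end Qvr

namespace Qvr

variable {Q : Qvr} {X : Set Q.V}

theorem reaches_refl (v : Q.V) : Q.Reaches v v := Or.inl rfl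

theorem reaches_trans {u v w : Q.V} (h1 : Q.Reaches u v) (h2 : Q.Reaches v w) :
    Q.Reaches u w := by
  rcases h1 with rfl | ⟨μ, hμ, hpμ, hsμ, hrμ⟩
  · exact h2
  rcases h2 with rfl | ⟨ν, hν, hpν, hsν, hrν⟩
  · exact Or.inr ⟨μ, hμ, hpμ, hsμ, hrμ⟩
  · refine Or.inr ⟨μ ++ ν, by simp [hμ], ?_, ?_, ?_⟩
    · refine List.IsChain.append hpμ hpν ?_
      intro x hx y hy
      rw [List.getLast?_eq_getLast hμ, Option.mem_some_iff] at hx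
      rw [List.head?_eq_head hν, Option.mem_some_iff] at hy
      subst hx; subst hy
      have : Q.r (μ.getLast hμ) = Q.s (ν.head hν) := by
        have := hrμ.trans hsν.symm
        simpa [pathRng, pathSrc] using this
      exact this
    · rw [← hsμ]; simp only [pathSrc]
      congr 1
      exact List.head_append_of_ne_nil hμ
    · rw [← hrν]; simp only [pathRng]
      congr 1
      exact List.getLast_append_of_ne_nil _ hν

theorem reaches_step {v w : Q.V} (h : Q.Reaches v w) :
    v = w ∨ ∃ e : Q.E, Q.s e = v ∧ Q.Reaches (Q.r e) w := by
  rcases h with rfl | ⟨μ, hμ, hp, hs, hr⟩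
  · exact Or.inl rfl
  match μ, hμ with
  | e :: t, _ =>
    refine Or.inr ⟨e, by simpa [pathSrc] using hs, ?_⟩
    rcases t with _ | ⟨f, t'⟩
    · left; simpa [pathRng] using hr
    · right
      refine ⟨f :: t', by simp, (List.isChain_cons_cons.mp hp).2, ?_, ?_⟩
      · simp only [pathSrc, List.head_cons]
        exact ((List.isChain_cons_cons.mp hp).1).symm
      · rw [← hr]; simp [pathRng]

theorem lam_succ_subset (n : ℕ) : Q.Lam X n ⊆ Q.Lam X (n + 1) :=
  Set.subset_union_right

theorem lam_mono {m n : ℕ} (h : m ≤ n) : Q.Lam X m ⊆ Q.Lam X n := by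
  induction h with
  | refl => exact subset_rfl
  | step h ih => exact ih.trans (lam_succ_subset _)

theorem lam_hereditary (n : ℕ) : Q.Hereditary (Q.Lam X n) := by
  induction n with
  | zero =>
    rintro v ⟨u, hu, huv⟩ w hvw
    exact ⟨u, hu, reaches_trans huv hvw⟩
  | succ n ih =>
    rintro v (⟨hreg, hall⟩ | hv) w hvw
    · rcases reaches_step hvw with rfl | ⟨e, hse, hrw⟩
      · exact Or.inl ⟨hreg, hall⟩
      · exact Or.inr (ih _ (hall e hse) w hrw)
    · exact Or.inr (ih v hv w hvw)

end Qvr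

/-- `⋃ₙ Λₙ(X)` is the hereditary saturated closure of `X`: it equals the
intersection of all hereditary saturated sets containing `X`, and is itself hereditary,
saturated and contains `X` (hence is the smallest such set). -/
theorem stmt6 (Q : Qvr) (X : Set Q.V) :
    (⋃ n : ℕ, Q.Lam X n) = Q.hsClosure X ∧
      Q.Hereditary (⋃ n : ℕ, Q.Lam X n) ∧
      Q.Saturated (⋃ n : ℕ, Q.Lam X n) ∧
      X ⊆ ⋃ n : ℕ, Q.Lam X n := by
  classical
  have hX : X ⊆ ⋃ n : ℕ, Q.Lam X n := fun x hx =>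
    Set.mem_iUnion.mpr ⟨0, x, hx, Qvr.reaches_refl x⟩
  have hHer : Q.Hereditary (⋃ n : ℕ, Q.Lam X n) := by
    intro v hv w hvw
    rcases Set.mem_iUnion.mp hv with ⟨n, hn⟩
    exact Set.mem_iUnion.mpr ⟨n, Qvr.lam_hereditary n v hn w hvw⟩
  have hSat : Q.Saturated (⋃ n : ℕ, Q.Lam X n) := by
    intro v hreg hall
    have hfin := hreg.2
    -- choose a level for each out-edge
    have hch : ∀ e : Q.E, Q.s e = v → ∃ n, Q.r e ∈ Q.Lam X n := fun e he =>
      Set.mem_iUnion.mp (hall e he)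
    choose f hf using fun (e : hfin.toFinset) =>
      hch e.1 (hfin.mem_toFinset.mp e.2)
    set N : ℕ := Finset.univ.sup f with hN
    refine Set.mem_iUnion.mpr ⟨N + 1, Or.inl ⟨hreg, ?_⟩⟩
    intro e he
    have hem : e ∈ hfin.toFinset := by simpa [Set.Finite.mem_toFinset] using he
    exact Qvr.lam_mono (Finset.le_sup (f := f) (Finset.mem_univ ⟨e, hem⟩)) (hf ⟨e, hem⟩)
  refine ⟨?_, hHer, hSat, hX⟩
  apply Set.Subset.antisymm
  · intro x hx
    rcases Set.mem_iUnion.mp hx with ⟨n, hn⟩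
    intro H hH
    rcases hH with ⟨hher, hsat, hXH⟩
    clear hx
    induction n generalizing x with
    | zero =>
      rcases hn with ⟨u, hu, huv⟩
      exact hher u (hXH hu) x huv
    | succ n ih =>
      rcases hn with ⟨hreg, hall⟩ | hn
      · exact hsat x hreg fun e he => ih (hall e he)
      · exact ih hn
  · intro x hx
    exact hx _ ⟨hHer, hSat, hX⟩
end

section
/- Elementary strong shift equivalence of square non-negative integer matrices (A ∼ B iff A = LR and B = RL for some non-negative integer matrices L, R) is a reflexive and symmetric relation, but it is not transitive in general; its transitive closure, strong shift equivalence, is an equivalence relation. -/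
/-- The type of square matrices of arbitrary size with non-negative integer entries. -/
def MatNN : Type := Σ n : ℕ, Matrix (Fin n) (Fin n) ℕ

/-- Elementary strong shift equivalence: `A = L·R` and `B = R·L` for some non-negative
integer matrices `L`, `R`. -/
def ElemSSE (A B : MatNN) : Prop :=
  ∃ (L : Matrix (Fin A.1) (Fin B.1) ℕ) (R : Matrix (Fin B.1) (Fin A.1) ℕ),
    A.2 = L * R ∧ B.2 = R * L

/-- Elementary strong shift equivalence is reflexive and symmetric but not
transitive; its transitive closure (strong shift equivalence) is an equivalence relation. -/
theorem stmt10 :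
    Reflexive ElemSSE ∧ Symmetric ElemSSE ∧ ¬ Transitive ElemSSE ∧
      Equivalence (Relation.TransGen ElemSSE) := by
  have hrefl : Reflexive ElemSSE := by
    intro A
    exact ⟨A.2, 1, by simp, by simp⟩
  have hsymm : Symmetric ElemSSE := by
    rintro A B ⟨L, R, h1, h2⟩
    exact ⟨R, L, h2, h1⟩
  refine ⟨hrefl, hsymm, ?_, ?_⟩
  · intro htrans
    have h1 : ElemSSE ⟨1, !![2]⟩ ⟨2, !![1,1;1,1]⟩ := by
      refine ⟨!![1,1], !![1;1], ?_, ?_⟩ <;>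
        · ext i j
          fin_cases i <;> fin_cases j <;>
            simp [Matrix.mul_apply, Fin.sum_univ_succ, Matrix.vecHead, Matrix.vecTail]
    have h2 : ElemSSE ⟨2, !![1,1;1,1]⟩ ⟨3, !![1,1,0;1,1,0;1,0,0]⟩ := by
      refine ⟨!![1,0,0;0,1,0], !![1,1;1,1;1,0], ?_, ?_⟩ <;>
        · ext i j
          fin_cases i <;> fin_cases j <;>
            simp [Matrix.mul_apply, Fin.sum_univ_succ, Matrix.vecHead, Matrix.vecTail]
    obtain ⟨L, R, hA, hB⟩ := htrans h1 h2
    have entry : ∀ i j, (!![1,1,0;1,1,0;1,0,0] : Matrix (Fin 3) (Fin 3) ℕ) i j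
        = R i 0 * L 0 j := by
      intro i j
      have := congrFun (congrFun hB i) j
      simpa [Matrix.mul_apply, Fin.sum_univ_one] using this
    have e00 := entry 0 0
    have e01 := entry 0 1
    have e20 := entry 2 0
    have e21 := entry 2 1
    simp at e00 e01 e20 e21
    have hr0 : R 0 0 = 1 := Nat.eq_one_of_mul_eq_one_right e00.symm
    have hl0 : L 0 0 = 1 := Nat.eq_one_of_mul_eq_one_left e00.symm
    have hl1 : L 0 1 = 1 := Nat.eq_one_of_mul_eq_one_left e01.symm
    have hr2 : R 2 0 = 1 := Nat.eq_one_of_mul_eq_one_right e20.symm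
    rw [hr2, hl1] at e21
    simp at e21
  · refine ⟨fun A => Relation.TransGen.single (hrefl A), ?_,
      fun h1 h2 => Relation.TransGen.trans h1 h2⟩
    intro a b h
    induction h with
    | single h => exact Relation.TransGen.single (hsymm h)
    | tail _ h2 ih => exact Relation.TransGen.trans (Relation.TransGen.single (hsymm h2)) ih
end

section
/- If square non-negative integer matrices A and B are strong shift equivalent, then A and B are shift equivalent: there exist non-negative integer matrices C and D and a positive integer n such that Aⁿ = CD, Bⁿ = DC, AC = CB, and DA = BD. -/
/-- Strong shift equivalence: the transitive closure of elementary strong shift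
equivalence. -/
def SSE : MatNN → MatNN → Prop := Relation.TransGen ElemSSE

/-- Shift equivalence (auxiliary definition). -/
def SE (A B : MatNN) : Prop :=
  ∃ (N : ℕ), 0 < N ∧ ∃ (C : Matrix (Fin A.1) (Fin B.1) ℕ) (D : Matrix (Fin B.1) (Fin A.1) ℕ),
    A.2 ^ N = C * D ∧ B.2 ^ N = D * C ∧ A.2 * C = C * B.2 ∧ D * A.2 = B.2 * D

lemma SE_of_elem {A B : MatNN} (h : ElemSSE A B) : SE A B := by
  obtain ⟨L, R, hA, hB⟩ := h
  exact ⟨1, one_pos, L, R, by rw [pow_one, hA], by rw [pow_one, hB],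
    by rw [hA, hB, Matrix.mul_assoc], by rw [hA, hB, Matrix.mul_assoc]⟩

lemma SE_trans {A B E : MatNN} (h1 : SE A B) (h2 : SE B E) : SE A E := by
  obtain ⟨N, hN, C, D, hCD, hDC, hAC, hDA⟩ := h1
  obtain ⟨M, hM, C', D', hCD', hDC', hBC', hDB'⟩ := h2
  have hACk : ∀ k : ℕ, A.2 ^ k * C = C * B.2 ^ k := by
    intro k
    induction k with
    | zero => simp
    | succ k ih =>
      rw [pow_succ, pow_succ, Matrix.mul_assoc, hAC, ← Matrix.mul_assoc, ih,
        Matrix.mul_assoc]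
  have hDBk : ∀ k : ℕ, D' * B.2 ^ k = E.2 ^ k * D' := by
    intro k
    induction k with
    | zero => simp
    | succ k ih =>
      rw [pow_succ, pow_succ, ← Matrix.mul_assoc, ih, Matrix.mul_assoc, hDB',
        ← Matrix.mul_assoc]
  refine ⟨N + M, by omega, C * C', D' * D, ?_, ?_, ?_, ?_⟩
  · calc A.2 ^ (N + M) = A.2 ^ M * A.2 ^ N := by rw [← pow_add, Nat.add_comm]
      _ = A.2 ^ M * (C * D) := by rw [hCD]
      _ = (A.2 ^ M * C) * D := by rw [Matrix.mul_assoc]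
      _ = (C * B.2 ^ M) * D := by rw [hACk]
      _ = (C * (C' * D')) * D := by rw [hCD']
      _ = C * C' * (D' * D) := by
        rw [Matrix.mul_assoc, Matrix.mul_assoc, Matrix.mul_assoc]
  · calc E.2 ^ (N + M) = E.2 ^ N * E.2 ^ M := by rw [← pow_add]
      _ = E.2 ^ N * (D' * C') := by rw [hDC']
      _ = (E.2 ^ N * D') * C' := by rw [Matrix.mul_assoc]
      _ = (D' * B.2 ^ N) * C' := by rw [hDBk]
      _ = (D' * (D * C)) * C' := by rw [hDC]
      _ = D' * D * (C * C') := by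
        rw [Matrix.mul_assoc, Matrix.mul_assoc, Matrix.mul_assoc]
  · rw [← Matrix.mul_assoc, hAC, Matrix.mul_assoc, hBC', Matrix.mul_assoc]
  · rw [Matrix.mul_assoc, hDA, ← Matrix.mul_assoc, hDB', Matrix.mul_assoc]

lemma SE_of_SSE {A B : MatNN} (h : SSE A B) : SE A B := by
  induction h with
  | single h => exact SE_of_elem h
  | tail _ h ih => exact SE_trans ih (SE_of_elem h)

/-- Strong shift equivalent non-negative integer matrices are shift
equivalent: there are non-negative integer matrices `C`, `D` and a lag `N > 0` with
`A^N = C·D`, `B^N = D·C`, `A·C = C·B` and `D·A = B·D`. -/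
theorem stmt11 {n m : ℕ} (A : Matrix (Fin n) (Fin n) ℕ) (B : Matrix (Fin m) (Fin m) ℕ)
    (h : SSE ⟨n, A⟩ ⟨m, B⟩) :
    ∃ (N : ℕ), 0 < N ∧ ∃ (C : Matrix (Fin n) (Fin m) ℕ) (D : Matrix (Fin m) (Fin n) ℕ),
      A ^ N = C * D ∧ B ^ N = D * C ∧ A * C = C * B ∧ D * A = B * D := by
  exact SE_of_SSE h
end

section
/- Let Q be a finite quiver and n ≥ 2. Then the (n+1)-st higher edge quiver satisfies Q^[n+1] ≅ (Q^[n])^[2]; that is, the higher edge quiver construction iterates: the second higher edge quiver of the n-th higher edge quiver is isomorphic to the (n+1)-st higher edge quiver of Q. -/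
/-- An isomorphism of quivers: bijections on vertices and edges commuting with the
source and range maps. -/
def QIso (Q1 Q2 : Qvr) : Prop :=
  ∃ (fv : Q1.V ≃ Q2.V) (fe : Q1.E ≃ Q2.E),
    (∀ e : Q1.E, Q2.s (fe e) = fv (Q1.s e)) ∧ (∀ e : Q1.E, Q2.r (fe e) = fv (Q1.r e))

/-- Vertices of the `n`-th higher edge quiver: paths of length `n - 1` in `Q`. -/
@[reducible] def HEV (Q : Qvr) (n : ℕ) : Type :=
  {l : List Q.E // Q.IsPath l ∧ l.length + 1 = n}

/-- The `n`-th higher edge quiver `Q^[n]`: vertices are the paths of length `n - 1` and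
there is exactly one edge from `e₁…e_{n-1}` to `f₁…f_{n-1}` whenever
`e₂…e_{n-1} = f₁…f_{n-2}` and the concatenation is again a path (for `n = 2` this says
`r(e₁) = s(f₁)`). -/
@[reducible] def HE (Q : Qvr) (n : ℕ) : Qvr where
  V := HEV Q n
  E := {pq : HEV Q n × HEV Q n //
    ∃ (e f : Q.E) (t : List Q.E), pq.1.1 = e :: t ∧ pq.2.1 = t ++ [f] ∧
      Q.IsPath (e :: (t ++ [f]))}
  s := fun x => x.1.1
  r := fun x => x.1.2


namespace Stmt13Aux

open List

variable {Q : Qvr} {n : ℕ}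

theorem vne (v : HEV Q (n+1)) (hn : 2 ≤ n) : v.1 ≠ [] := by
  have h := v.2.2
  exact List.ne_nil_of_length_pos (by omega)

theorem vtne (v : HEV Q (n+1)) (hn : 2 ≤ n) : v.1.tail ≠ [] := by
  have h := v.2.2
  have : v.1.tail.length = n - 1 := by simp; omega
  exact List.ne_nil_of_length_pos (by omega)

/-- The `HE Q n`-edge associated to a path of length `n`. -/
def fvEdge (hn : 2 ≤ n) (v : HEV Q (n+1)) : (HE Q n).E :=
  ⟨(⟨v.1.dropLast, v.2.1.dropLast, by have := v.2.2; simp; omega⟩,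
    ⟨v.1.tail, v.2.1.tail, by have := v.2.2; simp; omega⟩),
   v.1.head (vne v hn), v.1.tail.getLast (vtne v hn), v.1.tail.dropLast, by
     constructor
     · show v.1.dropLast = _
       conv_lhs => rw [← List.cons_head_tail (vne v hn)]
       rw [List.dropLast_cons_of_ne_nil (vtne v hn)]
     constructor
     · show v.1.tail = _
       rw [List.dropLast_append_getLast (vtne v hn)]
     · rw [List.dropLast_append_getLast (vtne v hn), List.cons_head_tail]
       exact v.2.1⟩

def fv (hn : 2 ≤ n) (v : HEV Q (n+1)) : (HE (HE Q n) 2).V :=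
  ⟨[fvEdge hn v], List.isChain_singleton _, rfl⟩

theorem wne (w : (HE (HE Q n) 2).V) : w.1 ≠ [] :=
  List.ne_nil_of_length_pos (by have := w.2.2; omega)

theorem wEdge_snd_ne (ε : (HE Q n).E) (hn : 2 ≤ n) : ε.1.2.1 ≠ [] := by
  have h := ε.1.2.2.2
  exact List.ne_nil_of_length_pos (by omega)

def gv (hn : 2 ≤ n) (w : (HE (HE Q n) 2).V) : HEV Q (n+1) := by
  refine ⟨(w.1.head (wne w)).1.1.1 ++
      [(w.1.head (wne w)).1.2.1.getLast (wEdge_snd_ne _ hn)], ?_, ?_⟩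
  · obtain ⟨e, f, t, h1, h2, h3⟩ := (w.1.head (wne w)).2
    rw [h1]
    have : ((w.1.head (wne w)).1.2.1).getLast (wEdge_snd_ne _ hn) = f := by
      simp_rw [h2]; exact List.getLast_concat
    rw [this]
    simpa using h3
  · have h := (w.1.head (wne w)).1.1.2.2
    simp; omega

theorem gv_val (hn : 2 ≤ n) (w : (HE (HE Q n) 2).V) {ε : (HE Q n).E}
    (hw : w.1.head (wne w) = ε) {e f : Q.E} {t : List Q.E}
    (h1 : ε.1.1.1 = e :: t) (h2 : ε.1.2.1 = t ++ [f]) :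
    (gv hn w).1 = e :: (t ++ [f]) := by
  subst hw
  show (w.1.head (wne w)).1.1.1 ++ [(w.1.head (wne w)).1.2.1.getLast (wEdge_snd_ne _ hn)]
      = e :: (t ++ [f])
  have hf : (w.1.head (wne w)).1.2.1.getLast (wEdge_snd_ne _ hn) = f := by
    simp_rw [h2]; exact List.getLast_concat
  rw [hf, h1]
  simp

theorem gv_fv (hn : 2 ≤ n) (v : HEV Q (n+1)) : gv hn (fv hn v) = v := by
  apply Subtype.ext
  have h1 : (fvEdge hn v).1.1.1 = v.1.head (vne v hn) :: v.1.tail.dropLast := by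
    show v.1.dropLast = _
    conv_lhs => rw [← List.cons_head_tail (vne v hn)]
    rw [List.dropLast_cons_of_ne_nil (vtne v hn)]
  have h2 : (fvEdge hn v).1.2.1 = v.1.tail.dropLast ++ [v.1.tail.getLast (vtne v hn)] := by
    show v.1.tail = _
    rw [List.dropLast_append_getLast (vtne v hn)]
  rw [gv_val hn (fv hn v) rfl h1 h2]
  show v.1.head (vne v hn) :: (v.1.tail.dropLast ++ [v.1.tail.getLast (vtne v hn)]) = v.1
  rw [List.dropLast_append_getLast (vtne v hn), List.cons_head_tail]

theorem fv_gv (hn : 2 ≤ n) (w : (HE (HE Q n) 2).V) : fv hn (gv hn w) = w := by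
  apply Subtype.ext
  have htail : w.1.tail = [] := by
    apply List.eq_nil_of_length_eq_zero
    have := w.2.2; simp; omega
  have hw : w.1 = [w.1.head (wne w)] := by
    conv_lhs => rw [← List.cons_head_tail (wne w)]
    rw [htail]
  show [fvEdge hn (gv hn w)] = w.1
  rw [hw]
  congr 1
  set ε := w.1.head (wne w) with hε
  apply Subtype.ext
  obtain ⟨e, f, t, h1, h2, h3⟩ := ε.2
  have hfl : ((ε.1.2.1).getLast (wEdge_snd_ne _ hn)) = f := by
    simp_rw [h2]; exact List.getLast_concat
  have hgv : (gv hn w).1 = ε.1.1.1 ++ [f] := by rw [← hfl]; rfl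
  apply Prod.ext
  · apply Subtype.ext
    show (gv hn w).1.dropLast = ε.1.1.1
    rw [hgv]; exact List.dropLast_concat
  · apply Subtype.ext
    show (gv hn w).1.tail = ε.1.2.1
    have h1ne : ε.1.1.1 ≠ [] := by rw [h1]; simp
    rw [hgv, List.tail_append_singleton_of_ne_nil h1ne, h1, h2]
    simp

def vEquiv (hn : 2 ≤ n) : (HE Q (n+1)).V ≃ (HE (HE Q n) 2).V :=
  ⟨fv hn, gv hn, gv_fv hn, fv_gv hn⟩

def fe (hn : 2 ≤ n) (ε : (HE Q (n+1)).E) : (HE (HE Q n) 2).E := by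
  refine ⟨(fv hn ε.1.1, fv hn ε.1.2), fvEdge hn ε.1.1, fvEdge hn ε.1.2, [], rfl, rfl, ?_⟩
  show List.Chain' _ [fvEdge hn ε.1.1, fvEdge hn ε.1.2]
  simp only [List.Chain', List.isChain_pair]
  show (fvEdge hn ε.1.1).1.2 = (fvEdge hn ε.1.2).1.1
  apply Subtype.ext
  obtain ⟨e, f, t, h1, h2, h3⟩ := ε.2
  show (ε.1.1).1.tail = (ε.1.2).1.dropLast
  rw [h1, h2]
  simp

def ge (hn : 2 ≤ n) (δ : (HE (HE Q n) 2).E) : (HE Q (n+1)).E := by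
  refine ⟨(gv hn δ.1.1, gv hn δ.1.2), ?_⟩
  obtain ⟨ε1, ε2, t, h1, h2, h3⟩ := δ.2
  have ht : t = [] := by
    have hl : (δ.1.1).1.length = 1 := by have := (δ.1.1).2.2; omega
    rw [h1] at hl; simp at hl
    exact hl
  subst ht
  have hh1 : (δ.1.1).1.head (wne _) = ε1 := by simp_rw [h1]; rfl
  have hh2 : (δ.1.2).1.head (wne _) = ε2 := by simp_rw [h2]; rfl
  have hrs : ε1.1.2 = ε2.1.1 := by
    have := h3
    simp only [Qvr.IsPath, List.nil_append] at this
    simp only [List.Chain', List.nil_append, List.isChain_pair] at this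
    exact (List.isChain_pair (R := fun (e f : (HE Q n).E) => e.1.2 = f.1.1)).mp this
  obtain ⟨e1, f1, t1, k1, k2, k3⟩ := ε1.2
  obtain ⟨e2, f2, t2, m1, m2, m3⟩ := ε2.2
  refine ⟨e1, f2, ε1.1.2.1, ?_, ?_, ?_⟩
  · rw [gv_val hn _ hh1 k1 k2, k2]
  · rw [gv_val hn _ hh2 m1 m2, hrs, m1]
    simp
  · -- IsPath (e1 :: (ε1.1.2.1 ++ [f2]))
    have hT : ε1.1.2.1 = t1 ++ [f1] := k2
    have hT2 : ε1.1.2.1 = e2 :: t2 := by rw [hrs, m1]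
    simp only [Qvr.IsPath, List.Chain', List.isChain_cons]
    constructor
    · intro y hy
      have hne : ε1.1.2.1 ≠ [] := by rw [hT]; simp
      have : (ε1.1.2.1 ++ [f2]).head? = ε1.1.2.1.head? := by
        cases hc : ε1.1.2.1 with
        | nil => exact absurd hc hne
        | cons a l => simp [hc]
      rw [this, hT2] at hy
      simp at hy
      subst hy
      -- need Q.r e1 = Q.s e2 : from k3, chain' (e1 :: (t1 ++ [f1])) and hT2
      have := k3
      simp only [Qvr.IsPath, List.Chain', List.isChain_cons] at this
      have h' := this.1
      have : (t1 ++ [f1]).head? = some e2 := by rw [← hT, hT2]; simp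
      exact h' e2 (by rw [this]; simp)
    · rw [hT2]
      have := m3
      rw [Qvr.IsPath] at this
      exact this

theorem ge_fe (hn : 2 ≤ n) (ε : (HE Q (n+1)).E) : ge hn (fe hn ε) = ε := by
  apply Subtype.ext
  show (gv hn (fv hn ε.1.1), gv hn (fv hn ε.1.2)) = ε.1
  rw [gv_fv, gv_fv]

theorem fe_ge (hn : 2 ≤ n) (δ : (HE (HE Q n) 2).E) : fe hn (ge hn δ) = δ := by
  apply Subtype.ext
  show (fv hn (gv hn δ.1.1), fv hn (gv hn δ.1.2)) = δ.1
  rw [fv_gv, fv_gv]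

def eEquiv (hn : 2 ≤ n) : (HE Q (n+1)).E ≃ (HE (HE Q n) 2).E :=
  ⟨fe hn, ge hn, ge_fe hn, fe_ge hn⟩

end Stmt13Aux

/-- For `n ≥ 2`, the higher edge quiver construction iterates:
`Q^[n+1] ≅ (Q^[n])^[2]`. -/
theorem stmt13 (Q : Qvr) (n : ℕ) (hn : 2 ≤ n) :
    QIso (HE Q (n + 1)) (HE (HE Q n) 2) := by
  exact ⟨Stmt13Aux.vEquiv hn, Stmt13Aux.eEquiv hn, fun e => rfl, fun e => rfl⟩
end

section
/- Let Q be a finite quiver with no sinks and let P be a partition of Q¹ refining the partition by ranges (each r⁻¹(v) split into nonempty sets ξ₁ᵛ,…,ξ_{m(v)}ᵛ). Then Q and the in-split quiver Q_r(P) are elementary strong shift equivalent. -/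
/-- Elementary strong shift equivalence of quivers (Definition 5.1 of Bates–Pask): there is
a bipartite quiver with vertex set `Q₁⁰ ⊔ Q₂⁰` (given by its two sets of crossing edges)
and source- and range-preserving bijections from `Qᵢ¹` onto the length-2 paths starting and
ending in the `i`-th block. -/
def ElemSSEQ (Q1 Q2 : Qvr) : Prop :=
  ∃ (E12 E21 : Type) (s12 : E12 → Q1.V) (r12 : E12 → Q2.V)
    (s21 : E21 → Q2.V) (r21 : E21 → Q1.V)
    (θ1 : Q1.E ≃ {p : E12 × E21 // r12 p.1 = s21 p.2})
    (θ2 : Q2.E ≃ {p : E21 × E12 // r21 p.1 = s12 p.2}),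
    (∀ e : Q1.E, s12 (θ1 e).1.1 = Q1.s e ∧ r21 (θ1 e).1.2 = Q1.r e) ∧
    (∀ e : Q2.E, s21 (θ2 e).1.1 = Q2.s e ∧ r12 (θ2 e).1.2 = Q2.r e)

/-- The in-split quiver `Q_r(𝒫)` determined by the data `m : Q⁰ → ℕ` (number of classes of
the partition of `r⁻¹(v)`; `m v = 0` exactly when `v` is a source) and `c : Q¹ → ℕ`
(the class of each edge in the partition of `r⁻¹(r(e))`).  Vertices are the pairs `vᵢ`
(`1 ≤ i ≤ m v`) together with `v₀` for sources `v`; edges are the pairs `eⱼ`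
(`1 ≤ j ≤ m (s e)`) together with `e₀` when `s e` is a source, with `s(eⱼ) = s(e)ⱼ` and
`r(eⱼ) = r(e)ᵢ` where `i = c e` is the class of `e`. -/
@[reducible] def InSplit (Q : Qvr) (m : Q.V → ℕ) (c : Q.E → ℕ)
    (hc : ∀ e : Q.E, 1 ≤ c e ∧ c e ≤ m (Q.r e)) : Qvr where
  V := {p : Q.V × ℕ // (1 ≤ p.2 ∧ p.2 ≤ m p.1) ∨ (p.2 = 0 ∧ m p.1 = 0)}
  E := {q : Q.E × ℕ // (1 ≤ q.2 ∧ q.2 ≤ m (Q.s q.1)) ∨ (q.2 = 0 ∧ m (Q.s q.1) = 0)}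
  s := fun q => ⟨(Q.s q.1.1, q.1.2), q.2⟩
  r := fun q => ⟨(Q.r q.1.1, c q.1.1), Or.inl (hc q.1.1)⟩

/-- A finite quiver with no sinks is elementary strong shift equivalent
to any of its in-split quivers. -/
theorem stmt14 (Q : Qvr) [Fintype Q.V] [Fintype Q.E]
    (hnosink : ∀ v : Q.V, ∃ e : Q.E, Q.s e = v)
    (m : Q.V → ℕ) (c : Q.E → ℕ)
    (hc : ∀ e : Q.E, 1 ≤ c e ∧ c e ≤ m (Q.r e))
    (hm0 : ∀ v : Q.V, m v = 0 ↔ ¬ ∃ e : Q.E, Q.r e = v)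
    (hcls : ∀ (v : Q.V) (i : ℕ), 1 ≤ i → i ≤ m v → ∃ e : Q.E, Q.r e = v ∧ c e = i) :
    ElemSSEQ Q (InSplit Q m c hc) := by
  set Q2 := InSplit Q m c hc
  refine ⟨Q.E, Q2.V, Q.s, fun e => ⟨(Q.r e, c e), Or.inl (hc e)⟩, id, fun p => p.1.1,
    ?_, ?_, ?_, ?_⟩
  · exact {
      toFun := fun e => ⟨(e, ⟨(Q.r e, c e), Or.inl (hc e)⟩), rfl⟩
      invFun := fun p => p.1.1
      left_inv := fun e => rfl
      right_inv := fun p => by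
        obtain ⟨⟨e, v⟩, h⟩ := p
        simpa using h }
  · exact {
      toFun := fun q => ⟨(⟨(Q.s q.1.1, q.1.2), q.2⟩, q.1.1), rfl⟩
      invFun := fun p => ⟨(p.1.2, p.1.1.1.2), by
        have h := p.2
        obtain ⟨⟨⟨⟨v, j⟩, hv⟩, e⟩, h⟩ := p
        simp only at h ⊢
        subst h
        exact hv⟩
      left_inv := fun q => rfl
      right_inv := fun p => by
        obtain ⟨⟨⟨⟨v, j⟩, hv⟩, e⟩, h⟩ := p
        simp only at h
        subst h
        rfl }
  · exact fun e => ⟨rfl, rfl⟩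
  · exact fun e => ⟨rfl, rfl⟩
end

section
/- Let Q be a quiver and assign to each edge e a weight w(e) in a group G, with w(e*) = w(e)⁻¹ and w(v) = identity. Then the Leavitt path algebra L_k(Q) is a G-graded algebra: the Cuntz–Krieger relations are homogeneous with respect to this grading, so L_k(Q) inherits a G-grading from the path algebra of the extended quiver. In particular, with w(e) = 1 ∈ ℤ for all edges, L_k(Q)_n = span_k{pq* : p, q paths, length(p) − length(q) = n}. -/
/-- A (possibly trivial) path in `Q`: a source vertex together with a composable list of
edges starting at it.  The empty list represents the trivial path at `src`. -/
structure QPath (Q : Qvr) where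
  src : Q.V
  edges : List Q.E
  chain : Q.IsPath edges
  hsrc : ∀ h : edges ≠ [], Q.pathSrc edges h = src

/-- The range of a path (its source if the path is trivial). -/
def QPath.rng {Q : Qvr} (p : QPath Q) : Q.V :=
  p.edges.getLast?.elim p.src Q.r

/-- The element `p ∈ L_k(Q)` corresponding to a path: the source idempotent times the
product of the edge generators. -/
noncomputable def pelem (k : Type) [Field k] (Q : Qvr) [Fintype Q.V] (p : QPath Q) :
    LPA k Q :=
  lv k Q p.src * (p.edges.map (le k Q)).prod

/-- The element `p* ∈ L_k(Q)` corresponding to a ghost path: the product of the ghost edge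
generators in reverse order times the source idempotent. -/
noncomputable def pstar (k : Type) [Field k] (Q : Qvr) [Fintype Q.V] (p : QPath Q) :
    LPA k Q :=
  (p.edges.reverse.map (lg k Q)).prod * lv k Q p.src

/-- The homogeneous component of degree `g` of `L_k(Q)` for the grading induced by a weight
map `w : Q¹ → G` (with `w(e*) = -w(e)` and vertices of weight `0`): the span of the
monomials `p q*` with `r(p) = r(q)` and `w(p) - w(q) = g`. -/
noncomputable def gradeComp (k : Type) [Field k] (Q : Qvr) [Fintype Q.V]
    (G : Type) [AddGroup G] (w : Q.E → G) (g : G) : Submodule k (LPA k Q) :=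
  Submodule.span k {x : LPA k Q | ∃ p q : QPath Q, p.rng = q.rng ∧
    (p.edges.map w).sum - (q.edges.map w).sum = g ∧ x = pelem k Q p * pstar k Q q}

namespace LPAux

variable {k : Type} [Field k] {Q : Qvr} [Fintype Q.V]

lemma lrel {a b : FreeAlgebra k (LGen Q)} (h : LRel k Q a b) :
    RingQuot.mkAlgHom k (LRel k Q) a = RingQuot.mkAlgHom k (LRel k Q) b :=
  RingQuot.mkAlgHom_rel k h

lemma lv_idem (v : Q.V) : lv k Q v * lv k Q v = lv k Q v := by
  have := lrel (LRel.idem (k := k) (Q := Q) v); rw [map_mul] at this; exact this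

lemma lv_orth {v w : Q.V} (h : v ≠ w) : lv k Q v * lv k Q w = 0 := by
  have := lrel (LRel.orth (k := k) (Q := Q) v w h)
  rw [map_mul, map_zero] at this; exact this

lemma src_le (e : Q.E) : lv k Q (Q.s e) * le k Q e = le k Q e := by
  have := lrel (LRel.src_edge (k := k) (Q := Q) e); rw [map_mul] at this; exact this

lemma le_rng (e : Q.E) : le k Q e * lv k Q (Q.r e) = le k Q e := by
  have := lrel (LRel.edge_rng (k := k) (Q := Q) e); rw [map_mul] at this; exact this

lemma rng_lg (e : Q.E) : lv k Q (Q.r e) * lg k Q e = lg k Q e := by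
  have := lrel (LRel.rng_ghost (k := k) (Q := Q) e); rw [map_mul] at this; exact this

lemma lg_src (e : Q.E) : lg k Q e * lv k Q (Q.s e) = lg k Q e := by
  have := lrel (LRel.ghost_src (k := k) (Q := Q) e); rw [map_mul] at this; exact this

lemma lg_le_same (e : Q.E) : lg k Q e * le k Q e = lv k Q (Q.r e) := by
  have := lrel (LRel.ck1_eq (k := k) (Q := Q) e); rw [map_mul] at this; exact this

lemma lg_le_ne {e f : Q.E} (h : e ≠ f) : lg k Q e * le k Q f = 0 := by
  have := lrel (LRel.ck1_ne (k := k) (Q := Q) e f h)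
  rw [map_mul, map_zero] at this; exact this

lemma one_eq_sum : (1 : LPA k Q) = ∑ v : Q.V, lv k Q v := by
  have := lrel (LRel.unit (k := k) (Q := Q))
  rw [map_one, map_sum] at this; exact this

lemma ck2_sum (v : Q.V) (h : {e : Q.E | Q.s e = v}.Finite)
    (hne : {e : Q.E | Q.s e = v}.Nonempty) :
    lv k Q v = ∑ e ∈ h.toFinset, le k Q e * lg k Q e := by
  have := lrel (LRel.ck2 (k := k) (Q := Q) v h hne)
  rw [map_sum] at this
  simp only [map_mul] at this; exact this

end LPAux

namespace LPAux

def endAt (Q : Qvr) (v : Q.V) (l : List Q.E) : Q.V := l.getLast?.elim v Q.r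

@[simp] lemma endAt_nil (Q : Qvr) (v : Q.V) : endAt Q v [] = v := rfl

lemma endAt_cons (Q : Qvr) (v : Q.V) (e : Q.E) (t : List Q.E) :
    endAt Q v (e :: t) = endAt Q (Q.r e) t := by
  cases t with
  | nil => rfl
  | cons f t' =>
    rw [endAt, endAt, List.getLast?_cons_cons,
      List.getLast?_eq_getLast (l := f :: t') (by simp)]
    rfl

lemma endAt_append (Q : Qvr) (v : Q.V) (l m : List Q.E) :
    endAt Q v (l ++ m) = endAt Q (endAt Q v l) m := by
  induction l generalizing v with
  | nil => simp
  | cons e t ih => rw [List.cons_append, endAt_cons, endAt_cons, ih]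

lemma endAt_eq_r_getLast (Q : Qvr) (v : Q.V) (l : List Q.E) (h : l ≠ []) :
    endAt Q v l = Q.r (l.getLast h) := by
  simp [endAt, List.getLast?_eq_getLast h]

lemma rng_def {Q : Qvr} (p : QPath Q) : p.rng = endAt Q p.src p.edges := rfl

variable (k : Type) [Field k] (Q : Qvr) [Fintype Q.V]

/-- product of edge generators -/
noncomputable def eprod (l : List Q.E) : LPA k Q := (l.map (le k Q)).prod

/-- product of ghost generators in reverse order -/
noncomputable def gprod (l : List Q.E) : LPA k Q := (l.reverse.map (lg k Q)).prod

@[simp] lemma eprod_nil : eprod k Q [] = 1 := rfl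
@[simp] lemma gprod_nil : gprod k Q [] = 1 := rfl

lemma eprod_cons (e : Q.E) (t : List Q.E) :
    eprod k Q (e :: t) = le k Q e * eprod k Q t := by
  simp [eprod]

lemma gprod_cons (e : Q.E) (t : List Q.E) :
    gprod k Q (e :: t) = gprod k Q t * lg k Q e := by
  simp [gprod]

lemma eprod_append (l m : List Q.E) :
    eprod k Q (l ++ m) = eprod k Q l * eprod k Q m := by
  simp [eprod]

lemma gprod_append (l m : List Q.E) :
    gprod k Q (l ++ m) = gprod k Q m * gprod k Q l := by
  simp [gprod]

/-- normal form `v · e₁ ⋯ eₙ` -/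
noncomputable def pel (v : Q.V) (l : List Q.E) : LPA k Q := lv k Q v * eprod k Q l

/-- normal form `eₙ* ⋯ e₁* · v` -/
noncomputable def pst (v : Q.V) (l : List Q.E) : LPA k Q := gprod k Q l * lv k Q v

lemma pelem_eq (p : QPath Q) : pelem k Q p = pel k Q p.src p.edges := rfl
lemma pstar_eq (p : QPath Q) : pstar k Q p = pst k Q p.src p.edges := rfl

@[simp] lemma pel_nil (v : Q.V) : pel k Q v [] = lv k Q v := by simp [pel]
@[simp] lemma pst_nil (v : Q.V) : pst k Q v [] = lv k Q v := by simp [pst]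

lemma pel_cons (v : Q.V) (e : Q.E) (t : List Q.E) :
    pel k Q v (e :: t) = lv k Q v * le k Q e * pel k Q (Q.r e) t := by
  simp only [pel, eprod_cons, mul_assoc]
  congr 1
  rw [← mul_assoc, LPAux.le_rng]

lemma pst_cons (v : Q.V) (e : Q.E) (t : List Q.E) :
    pst k Q v (e :: t) = pst k Q (Q.r e) t * (lg k Q e * lv k Q v) := by
  rw [pst, gprod_cons, pst, mul_assoc, mul_assoc]
  congr 1
  rw [← mul_assoc, LPAux.rng_lg]

lemma pel_mul_lv (v : Q.V) (l : List Q.E) :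
    pel k Q v l * lv k Q (endAt Q v l) = pel k Q v l := by
  induction l generalizing v with
  | nil => simp [LPAux.lv_idem]
  | cons e t ih =>
    rw [pel_cons, endAt_cons, mul_assoc, ih]

lemma lv_mul_pst (v : Q.V) (l : List Q.E) :
    lv k Q (endAt Q v l) * pst k Q v l = pst k Q v l := by
  induction l generalizing v with
  | nil => simp [LPAux.lv_idem]
  | cons e t ih =>
    rw [pst_cons, endAt_cons, ← mul_assoc, ih]

lemma pel_append (v : Q.V) (l m : List Q.E) :
    pel k Q v (l ++ m) = pel k Q v l * pel k Q (endAt Q v l) m := by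
  conv_rhs => rw [show pel k Q (endAt Q v l) m = lv k Q (endAt Q v l) * eprod k Q m from rfl,
      ← mul_assoc, pel_mul_lv]
  rw [pel, pel, eprod_append, mul_assoc]

end LPAux

namespace LPAux

lemma isPath_tail {Q : Qvr} {e : Q.E} {t : List Q.E} (h : Q.IsPath (e :: t)) :
    Q.IsPath t := (List.isChain_cons.mp h).2

lemma isPath_head {Q : Qvr} {e : Q.E} {t : List Q.E} (h : Q.IsPath (e :: t)) :
    ∀ y ∈ t.head?, Q.r e = Q.s y := (List.isChain_cons.mp h).1

variable (k : Type) [Field k] (Q : Qvr) [Fintype Q.V]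

lemma pst_append (v : Q.V) (l m : List Q.E) :
    pst k Q v (l ++ m) = pst k Q (endAt Q v l) m * pst k Q v l := by
  conv_rhs => rw [show pst k Q (endAt Q v l) m = gprod k Q m * lv k Q (endAt Q v l) from rfl,
    mul_assoc, lv_mul_pst]
  rw [pst, pst, gprod_append, mul_assoc]

lemma cancel (a : List Q.E) : ∀ (b : List Q.E) (v : Q.V), Q.IsPath a → Q.IsPath b →
    (∀ h : a ≠ [], Q.s (a.head h) = v) → (∀ h : b ≠ [], Q.s (b.head h) = v) →
    (∃ t, b = a ++ t ∧ Q.IsPath t ∧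
        gprod k Q a * pel k Q v b = pel k Q (endAt Q v a) t) ∨
    (∃ t, a = b ++ t ∧ Q.IsPath t ∧
        gprod k Q a * pel k Q v b = pst k Q (endAt Q v b) t) ∨
    gprod k Q a * pel k Q v b = 0 := by
  induction a with
  | nil =>
    intro b v _ hb _ _
    left; exact ⟨b, rfl, hb, by simp⟩
  | cons x a' ih =>
    intro b v ha hb hva hvb
    cases b with
    | nil =>
      right; left
      exact ⟨x :: a', rfl, ha, by simp [pst]⟩
    | cons y b' =>
      have hv : Q.s x = v := hva (by simp)
      have key : gprod k Q (x :: a') * pel k Q v (y :: b')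
          = gprod k Q a' * (lg k Q x * (le k Q y * pel k Q (Q.r y) b')) := by
        simp only [gprod_cons, pel_cons, mul_assoc]
        rw [← hv, ← mul_assoc (lg k Q x) (lv k Q (Q.s x)), LPAux.lg_src]
      by_cases hxy : x = y
      · subst hxy
        have key2 : gprod k Q (x :: a') * pel k Q v (x :: b')
            = gprod k Q a' * pel k Q (Q.r x) b' := by
          rw [key, ← mul_assoc (lg k Q x), LPAux.lg_le_same]
          congr 1
          rw [pel, ← mul_assoc, LPAux.lv_idem]
        have ha' : Q.IsPath a' := isPath_tail ha
        have hb' : Q.IsPath b' := isPath_tail hb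
        have hva' : ∀ h : a' ≠ [], Q.s (a'.head h) = Q.r x := by
          intro h
          exact (isPath_head ha _ (by simp [List.head?_eq_head h])).symm
        have hvb' : ∀ h : b' ≠ [], Q.s (b'.head h) = Q.r x := by
          intro h
          exact (isPath_head hb _ (by simp [List.head?_eq_head h])).symm
        rcases ih b' (Q.r x) ha' hb' hva' hvb' with ⟨t, ht, hpt, heq⟩ | ⟨t, ht, hpt, heq⟩ | heq
        · left
          exact ⟨t, by rw [ht, List.cons_append], hpt, by rw [key2, heq, endAt_cons]⟩
        · right; left
          exact ⟨t, by rw [ht, List.cons_append], hpt, by rw [key2, heq, endAt_cons]⟩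
        · right; right
          rw [key2, heq]
      · right; right
        rw [key, ← mul_assoc (lg k Q x), LPAux.lg_le_ne hxy, zero_mul, mul_zero]

end LPAux

namespace LPAux

lemma eq_head_of_mem_head? {α : Type*} {t : List α} {y : α} (hy : y ∈ t.head?) :
    ∃ h : t ≠ [], y = t.head h := by
  cases t with
  | nil => simp at hy
  | cons a t => exact ⟨by simp, by simpa using hy.symm⟩

lemma eq_getLast_of_mem_getLast? {α : Type*} {l : List α} {x : α} (hx : x ∈ l.getLast?) :
    ∃ h : l ≠ [], x = l.getLast h := by
  have hne : l ≠ [] := by rintro rfl; simp at hx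
  refine ⟨hne, ?_⟩
  rw [List.getLast?_eq_getLast hne] at hx
  simpa using hx.symm

lemma s_mem_head {Q : Qvr} (χ : QPath Q) : ∀ y ∈ χ.edges.head?, Q.s y = χ.src := by
  intro y hy
  obtain ⟨h, rfl⟩ := eq_head_of_mem_head? hy
  exact χ.hsrc h

lemma s_head_eq_endAt {Q : Qvr} (χ : QPath Q) (base t : List Q.E)
    (hsplit : χ.edges = base ++ t) : ∀ y ∈ t.head?, Q.s y = endAt Q χ.src base := by
  intro y hy
  cases base with
  | nil =>
    rw [endAt_nil]
    have hce : χ.edges = t := by rw [hsplit, List.nil_append]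
    exact s_mem_head χ y (by rw [hce]; exact hy)
  | cons b bs =>
    have hbne : b :: bs ≠ [] := by simp
    have hch : List.Chain' (fun e f => Q.r e = Q.s f) ((b :: bs) ++ t) := hsplit ▸ χ.chain
    have link := (List.isChain_append.mp hch).2.2
    have h2 := link _ (Option.mem_def.mpr (List.getLast?_eq_getLast hbne)) y hy
    rw [← h2, endAt_eq_r_getLast Q χ.src _ hbne]

lemma pathSrc_append {Q : Qvr} (l t : List Q.E) (h : l ++ t ≠ []) (w : Q.V)
    (hl : ∀ h' : l ≠ [], Q.s (l.head h') = w)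
    (ht : ∀ (_ : l = []) (h' : t ≠ []), Q.s (t.head h') = w) :
    Q.s ((l ++ t).head h) = w := by
  cases l with
  | nil => exact ht rfl (by simpa using h)
  | cons a l' => exact hl (by simp)

lemma mk_append {Q : Qvr} (π : QPath Q) (t : List Q.E) (hpt : Q.IsPath t)
    (hlink : ∀ y ∈ t.head?, Q.s y = π.rng) :
    ∃ P : QPath Q, P.src = π.src ∧ P.edges = π.edges ++ t ∧ P.rng = endAt Q π.rng t := by
  refine ⟨⟨π.src, π.edges ++ t, ?_, ?_⟩, rfl, rfl, ?_⟩
  · refine List.isChain_append.mpr ⟨π.chain, hpt, ?_⟩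
    intro x hx y hy
    obtain ⟨hne, rfl⟩ := eq_getLast_of_mem_getLast? hx
    rw [hlink y hy, rng_def, endAt_eq_r_getLast Q π.src _ hne]
  · intro h
    refine pathSrc_append _ _ h _ (fun h' => π.hsrc h') (fun h0 h' => ?_)
    rw [hlink (t.head h') (Option.mem_def.mpr (List.head?_eq_head h')), rng_def, h0, endAt_nil]
  · show endAt Q π.src (π.edges ++ t) = endAt Q π.rng t
    rw [endAt_append, ← rng_def]

variable (k : Type) [Field k] (Q : Qvr) [Fintype Q.V]

lemma mono_mul (p q μ ν : QPath Q) (hpq : p.rng = q.rng) (hμν : μ.rng = ν.rng) :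
    (pelem k Q p * pstar k Q q) * (pelem k Q μ * pstar k Q ν) = 0 ∨
    ∃ (P N : QPath Q) (t : List Q.E), P.rng = N.rng ∧
      ((P.edges = p.edges ++ t ∧ μ.edges = q.edges ++ t ∧ N.edges = ν.edges) ∨
       (N.edges = ν.edges ++ t ∧ q.edges = μ.edges ++ t ∧ P.edges = p.edges)) ∧
      (pelem k Q p * pstar k Q q) * (pelem k Q μ * pstar k Q ν)
        = pelem k Q P * pstar k Q N := by
  have hX : (pelem k Q p * pstar k Q q) * (pelem k Q μ * pstar k Q ν)
      = pelem k Q p * ((pstar k Q q * pelem k Q μ) * pstar k Q ν) := by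
    rw [mul_assoc, ← mul_assoc (pstar k Q q)]
  by_cases hsrc : q.src = μ.src
  · have middle : pstar k Q q * pelem k Q μ
        = gprod k Q q.edges * pel k Q q.src μ.edges := by
      rw [pstar_eq, pelem_eq, pst, pel, pel, mul_assoc,
        ← mul_assoc (lv k Q q.src), ← hsrc, LPAux.lv_idem]
    have hva : ∀ h : q.edges ≠ [], Q.s (q.edges.head h) = q.src := fun h => q.hsrc h
    have hvb : ∀ h : μ.edges ≠ [], Q.s (μ.edges.head h) = q.src :=
      fun h => (μ.hsrc h).trans hsrc.symm
    rcases cancel k Q q.edges μ.edges q.src q.chain μ.chain hva hvb with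
      ⟨t, ht, hpt, heq⟩ | ⟨t, ht, hpt, heq⟩ | heq
    · -- μ.edges = q.edges ++ t
      have hhead : ∀ y ∈ t.head?, Q.s y = q.rng := by
        intro y hy
        have h1 := s_head_eq_endAt μ q.edges t ht y hy
        rwa [← hsrc, ← rng_def] at h1
      obtain ⟨P, hPsrc, hPedges, hPrng⟩ :=
        mk_append p t hpt (fun y hy => (hhead y hy).trans hpq.symm)
      right
      refine ⟨P, ν, t, ?_, Or.inl ⟨hPedges, ht, rfl⟩, ?_⟩
      · rw [hPrng, hpq, ← hμν, show μ.rng = endAt Q μ.src μ.edges from rfl, ht,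
          endAt_append, ← hsrc, ← rng_def]
      · rw [hX, middle, heq, ← mul_assoc,
          show endAt Q q.src q.edges = endAt Q p.src p.edges from by
            rw [← rng_def, ← rng_def, hpq],
          pelem_eq k Q p, ← pel_append, ← hPedges, ← hPsrc, ← pelem_eq k Q P]
    · -- q.edges = μ.edges ++ t
      have hhead : ∀ y ∈ t.head?, Q.s y = μ.rng := by
        intro y hy
        have h1 := s_head_eq_endAt q μ.edges t ht y hy
        rwa [hsrc, ← rng_def] at h1
      obtain ⟨N, hNsrc, hNedges, hNrng⟩ :=
        mk_append ν t hpt (fun y hy => (hhead y hy).trans hμν)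
      right
      refine ⟨p, N, t, ?_, Or.inr ⟨hNedges, ht, rfl⟩, ?_⟩
      · rw [hNrng, ← hμν, hpq, show q.rng = endAt Q q.src q.edges from rfl, ht,
          endAt_append, hsrc, ← rng_def]
      · rw [hX, middle, heq,
          show endAt Q q.src μ.edges = endAt Q ν.src ν.edges from by
            rw [hsrc, ← rng_def, hμν, rng_def],
          pstar_eq k Q ν, ← pst_append, ← hNedges, ← hNsrc, ← pstar_eq k Q N]
    · left
      rw [hX, middle, heq, zero_mul, mul_zero]
  · left
    have h0 : pstar k Q q * pelem k Q μ = 0 := by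
      rw [pstar_eq, pelem_eq, pst, pel, mul_assoc, ← mul_assoc (lv k Q q.src),
        LPAux.lv_orth hsrc, zero_mul, mul_zero]
    rw [hX, h0, zero_mul, mul_zero]

end LPAux

namespace LPAux

variable (k : Type) [Field k] (Q : Qvr) [Fintype Q.V]

def trivPath (Q : Qvr) (v : Q.V) : QPath Q :=
  ⟨v, [], List.isChain_nil, fun h => absurd rfl h⟩

@[simp] lemma trivPath_rng (v : Q.V) : (trivPath Q v).rng = v := rfl

@[simp] lemma pelem_triv (v : Q.V) : pelem k Q (trivPath Q v) = lv k Q v := by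
  show pel k Q v [] = lv k Q v; simp

@[simp] lemma pstar_triv (v : Q.V) : pstar k Q (trivPath Q v) = lv k Q v := by
  show pst k Q v [] = lv k Q v; simp

def epath (Q : Qvr) (e : Q.E) : QPath Q :=
  ⟨Q.s e, [e], List.isChain_singleton e, fun _ => rfl⟩

@[simp] lemma epath_rng (e : Q.E) : (epath Q e).rng = Q.r e := rfl

@[simp] lemma pelem_epath (e : Q.E) : pelem k Q (epath Q e) = le k Q e := by
  show pel k Q (Q.s e) [e] = le k Q e
  rw [pel_cons, pel_nil, LPAux.src_le, LPAux.le_rng]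

@[simp] lemma pstar_epath (e : Q.E) : pstar k Q (epath Q e) = lg k Q e := by
  show pst k Q (Q.s e) [e] = lg k Q e
  rw [pst_cons, pst_nil, LPAux.lg_src, LPAux.rng_lg]

variable (G : Type) [AddGroup G] (w : Q.E → G)

lemma mem_gen (p q : QPath Q) (g : G) (hr : p.rng = q.rng)
    (hg : (p.edges.map w).sum - (q.edges.map w).sum = g) :
    pelem k Q p * pstar k Q q ∈ gradeComp k Q G w g :=
  Submodule.subset_span ⟨p, q, hr, hg, rfl⟩

lemma lv_mem (v : Q.V) : lv k Q v ∈ gradeComp k Q G w 0 := by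
  have := mem_gen k Q G w (trivPath Q v) (trivPath Q v) 0 rfl (by simp)
  simpa [LPAux.lv_idem] using this

lemma le_mem (e : Q.E) : le k Q e ∈ gradeComp k Q G w (w e) := by
  have := mem_gen k Q G w (epath Q e) (trivPath Q (Q.r e)) (w e) rfl (by simp [epath, trivPath])
  simpa [LPAux.le_rng] using this

lemma lg_mem (e : Q.E) : lg k Q e ∈ gradeComp k Q G w (-(w e)) := by
  have := mem_gen k Q G w (trivPath Q (Q.r e)) (epath Q e) (-(w e)) rfl (by simp [epath, trivPath])
  simpa [LPAux.rng_lg] using this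

lemma grade_one_mem : (1 : LPA k Q) ∈ gradeComp k Q G w 0 := by
  rw [LPAux.one_eq_sum]
  exact Submodule.sum_mem _ fun v _ => lv_mem k Q G w v

lemma grade_mul_mem {g h : G} {a b : LPA k Q}
    (ha : a ∈ gradeComp k Q G w g) (hb : b ∈ gradeComp k Q G w h) :
    a * b ∈ gradeComp k Q G w (g + h) := by
  induction ha using Submodule.span_induction with
  | mem x hx =>
    induction hb using Submodule.span_induction with
    | mem y hy =>
      obtain ⟨p, q, hpq, hg, rfl⟩ := hx
      obtain ⟨μ, ν, hμν, hh, rfl⟩ := hy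
      rcases mono_mul k Q p q μ ν hpq hμν with h0 | ⟨P, N, t, hPN, hcase, heq⟩
      · rw [h0]; exact Submodule.zero_mem _
      · rw [heq]
        refine mem_gen k Q G w P N _ hPN ?_
        rcases hcase with ⟨h1, h2, h3⟩ | ⟨h1, h2, h3⟩
        · rw [h1, h3, List.map_append, List.sum_append, ← hg, ← hh, h2,
            List.map_append, List.sum_append]
          simp [sub_eq_add_neg, neg_add_rev, add_assoc, neg_add_cancel_left]
        · rw [h1, h3, List.map_append, List.sum_append, ← hg, ← hh, h2,
            List.map_append, List.sum_append]
          simp [sub_eq_add_neg, neg_add_rev, add_assoc, neg_add_cancel_left]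
    | zero => rw [mul_zero]; exact Submodule.zero_mem _
    | add y z _ _ hy hz => rw [mul_add]; exact Submodule.add_mem _ hy hz
    | smul c y _ hy => rw [mul_smul_comm]; exact Submodule.smul_mem _ c hy
  | zero => rw [zero_mul]; exact Submodule.zero_mem _
  | add x y _ _ hx hy => rw [add_mul]; exact Submodule.add_mem _ hx hy
  | smul c x _ hx => rw [smul_mul_assoc]; exact Submodule.smul_mem _ c hx

instance gradedMonoid : SetLike.GradedMonoid (gradeComp k Q G w) where
  one_mem := grade_one_mem k Q G w
  mul_mem := by intro i j gi gj hi hj; exact grade_mul_mem k Q G w hi hj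

end LPAux

namespace LPAux

open scoped DirectSum

variable (k : Type) [Field k] (Q : Qvr) [Fintype Q.V]
variable (G : Type) [AddGroup G] [DecidableEq G] (w : Q.E → G)

/-- the degree of a generator -/
def deg : LGen Q → G
  | .vert _ => 0
  | .edge e => w e
  | .ghost e => -(w e)

/-- the generator inside the Leavitt path algebra -/
noncomputable def gel : LGen Q → LPA k Q
  | .vert v => lv k Q v
  | .edge e => le k Q e
  | .ghost e => lg k Q e

lemma gel_eq (x : LGen Q) : gel k Q x = RingQuot.mkAlgHom k (LRel k Q) (lgen k Q x) := by
  cases x <;> rfl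

lemma gel_mem (x : LGen Q) : gel k Q x ∈ gradeComp k Q G w (deg Q G w x) := by
  cases x with
  | vert v => exact lv_mem k Q G w v
  | edge e => exact le_mem k Q G w e
  | ghost e => exact lg_mem k Q G w e

lemma of_eq {i j : G} {a : gradeComp k Q G w i} {b : gradeComp k Q G w j}
    (hij : i = j) (hab : (a : LPA k Q) = (b : LPA k Q)) :
    DirectSum.of (fun g => gradeComp k Q G w g) i a
      = DirectSum.of (fun g => gradeComp k Q G w g) j b :=
  DirectSum.of_eq_of_gradedMonoid_eq (Sigma.subtype_ext hij hab)

/-- the lift of the grading to the free algebra -/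
noncomputable def Dfree : FreeAlgebra k (LGen Q) →ₐ[k] (⨁ (g : G), gradeComp k Q G w g) :=
  FreeAlgebra.lift k fun x =>
    DirectSum.of (fun g => gradeComp k Q G w g) (deg Q G w x) ⟨gel k Q x, gel_mem k Q G w x⟩

lemma Dfree_lgen (x : LGen Q) :
    Dfree k Q G w (lgen k Q x)
      = DirectSum.of (fun g => gradeComp k Q G w g) (deg Q G w x)
          ⟨gel k Q x, gel_mem k Q G w x⟩ :=
  FreeAlgebra.lift_ι_apply _ _

lemma elg_mem (e : Q.E) : le k Q e * lg k Q e ∈ gradeComp k Q G w 0 := by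
  have := SetLike.mul_mem_graded (le_mem k Q G w e) (lg_mem k Q G w e)
  rwa [add_neg_cancel] at this

lemma Dfree_rel : ∀ ⦃x y : FreeAlgebra k (LGen Q)⦄, LRel k Q x y →
    Dfree k Q G w x = Dfree k Q G w y := by
  intro x y h
  induction h with
  | orth v u hne =>
    simp only [map_mul, map_zero, Dfree_lgen]
    rw [DirectSum.of_mul_of]
    refine Eq.trans (congrArg _ ?_) (map_zero _)
    exact Subtype.ext ((SetLike.coe_gMul _ _ _).trans (LPAux.lv_orth hne))
  | idem v =>
    simp only [map_mul, Dfree_lgen]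
    rw [DirectSum.of_mul_of]
    exact of_eq k Q G w (add_zero 0) ((SetLike.coe_gMul _ _ _).trans (LPAux.lv_idem v))
  | src_edge e =>
    simp only [map_mul, Dfree_lgen]
    rw [DirectSum.of_mul_of]
    exact of_eq k Q G w (zero_add _) ((SetLike.coe_gMul _ _ _).trans (LPAux.src_le e))
  | edge_rng e =>
    simp only [map_mul, Dfree_lgen]
    rw [DirectSum.of_mul_of]
    exact of_eq k Q G w (add_zero _) ((SetLike.coe_gMul _ _ _).trans (LPAux.le_rng e))
  | rng_ghost e =>
    simp only [map_mul, Dfree_lgen]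
    rw [DirectSum.of_mul_of]
    exact of_eq k Q G w (zero_add _) ((SetLike.coe_gMul _ _ _).trans (LPAux.rng_lg e))
  | ghost_src e =>
    simp only [map_mul, Dfree_lgen]
    rw [DirectSum.of_mul_of]
    exact of_eq k Q G w (add_zero _) ((SetLike.coe_gMul _ _ _).trans (LPAux.lg_src e))
  | ck1_eq e =>
    simp only [map_mul, Dfree_lgen]
    rw [DirectSum.of_mul_of]
    exact of_eq k Q G w (neg_add_cancel _) ((SetLike.coe_gMul _ _ _).trans (LPAux.lg_le_same e))
  | ck1_ne e f hef =>
    simp only [map_mul, map_zero, Dfree_lgen]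
    rw [DirectSum.of_mul_of]
    refine Eq.trans (congrArg _ ?_) (map_zero _)
    exact Subtype.ext ((SetLike.coe_gMul _ _ _).trans (LPAux.lg_le_ne hef))
  | ck2 v hfin hne =>
    rw [Dfree_lgen, map_sum]
    have hterm : ∀ e ∈ hfin.toFinset,
        Dfree k Q G w (lgen k Q (.edge e) * lgen k Q (.ghost e))
          = DirectSum.of (fun g => gradeComp k Q G w g) 0
              ⟨le k Q e * lg k Q e, elg_mem k Q G w e⟩ := by
      intro e _
      rw [map_mul, Dfree_lgen, Dfree_lgen, DirectSum.of_mul_of]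
      exact of_eq k Q G w (add_neg_cancel _) (SetLike.coe_gMul _ _ _)
    rw [Finset.sum_congr rfl hterm, ← map_sum]
    refine of_eq k Q G w rfl ?_
    simp only [AddSubmonoidClass.coe_finset_sum]
    exact LPAux.ck2_sum v hfin hne
  | unit =>
    rw [map_one, map_sum, DirectSum.one_def]
    have hterm : ∀ v ∈ (Finset.univ : Finset Q.V),
        Dfree k Q G w (lgen k Q (.vert v))
          = DirectSum.of (fun g => gradeComp k Q G w g) 0
              ⟨lv k Q v, lv_mem k Q G w v⟩ := fun v _ => Dfree_lgen k Q G w _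
    rw [Finset.sum_congr rfl hterm, ← map_sum]
    refine of_eq k Q G w rfl ?_
    refine (SetLike.coe_gOne _).trans ?_
    simp only [AddSubmonoidClass.coe_finset_sum]
    exact LPAux.one_eq_sum

/-- the decomposition map -/
noncomputable def D : LPA k Q →ₐ[k] (⨁ (g : G), gradeComp k Q G w g) :=
  RingQuot.liftAlgHom k ⟨Dfree k Q G w, Dfree_rel k Q G w⟩

lemma D_mk (a : FreeAlgebra k (LGen Q)) :
    D k Q G w (RingQuot.mkAlgHom k (LRel k Q) a) = Dfree k Q G w a :=
  RingQuot.liftAlgHom_mkAlgHom_apply _ _ _ _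

lemma coeD_free (a : FreeAlgebra k (LGen Q)) :
    DirectSum.coeAlgHom (gradeComp k Q G w) (Dfree k Q G w a)
      = RingQuot.mkAlgHom k (LRel k Q) a := by
  induction a using FreeAlgebra.induction with
  | grade0 r => rw [AlgHom.commutes, AlgHom.commutes, AlgHom.commutes]; rfl
  | grade1 x =>
    rw [show FreeAlgebra.ι k x = lgen k Q x from rfl, Dfree_lgen, DirectSum.coeAlgHom_of,
      ← gel_eq]
  | mul a b ha hb => rw [map_mul, map_mul, map_mul, ha, hb]; rfl
  | add a b ha hb => rw [map_add, map_add, map_add, ha, hb]; rfl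

end LPAux

namespace LPAux

open scoped DirectSum

variable (k : Type) [Field k] (Q : Qvr) [Fintype Q.V]
variable (G : Type) [AddGroup G] [DecidableEq G] (w : Q.E → G)

lemma pelem_mul_lv (p : QPath Q) : pelem k Q p * lv k Q p.rng = pelem k Q p := by
  rw [pelem_eq, rng_def, pel_mul_lv]

lemma lv_mul_pstar (q : QPath Q) : lv k Q q.rng * pstar k Q q = pstar k Q q := by
  rw [pstar_eq, rng_def, lv_mul_pst]

lemma pelem_mem (p : QPath Q) :
    pelem k Q p ∈ gradeComp k Q G w ((p.edges.map w).sum) := by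
  have := mem_gen k Q G w p (trivPath Q p.rng) _ rfl
    (by simp [trivPath] : (p.edges.map w).sum - (((trivPath Q p.rng).edges).map w).sum
        = (p.edges.map w).sum)
  simpa [pstar_triv, pelem_mul_lv] using this

lemma pstar_mem (q : QPath Q) :
    pstar k Q q ∈ gradeComp k Q G w (-((q.edges.map w).sum)) := by
  have := mem_gen k Q G w (trivPath Q q.rng) q _ rfl
    (by simp [trivPath] : (((trivPath Q q.rng).edges).map w).sum - ((q.edges.map w).sum)
        = -((q.edges.map w).sum))
  simpa [pelem_triv, lv_mul_pstar] using this

lemma pel_mem (v : Q.V) (l : List Q.E) (hc : Q.IsPath l)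
    (hs : ∀ h : l ≠ [], Q.s (l.head h) = v) :
    pel k Q v l ∈ gradeComp k Q G w ((l.map w).sum) :=
  pelem_mem k Q G w ⟨v, l, hc, hs⟩

lemma pst_mem (v : Q.V) (l : List Q.E) (hc : Q.IsPath l)
    (hs : ∀ h : l ≠ [], Q.s (l.head h) = v) :
    pst k Q v l ∈ gradeComp k Q G w (-((l.map w).sum)) :=
  pstar_mem k Q G w ⟨v, l, hc, hs⟩

lemma D_lv (v : Q.V) :
    D k Q G w (lv k Q v) = DirectSum.of (fun g => gradeComp k Q G w g) 0
      ⟨lv k Q v, lv_mem k Q G w v⟩ := by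
  exact (D_mk k Q G w (lgen k Q (.vert v))).trans
    ((Dfree_lgen k Q G w _).trans (of_eq k Q G w rfl rfl))

lemma D_le (e : Q.E) :
    D k Q G w (le k Q e) = DirectSum.of (fun g => gradeComp k Q G w g) (w e)
      ⟨le k Q e, le_mem k Q G w e⟩ := by
  exact (D_mk k Q G w (lgen k Q (.edge e))).trans
    ((Dfree_lgen k Q G w _).trans (of_eq k Q G w rfl rfl))

lemma D_lg (e : Q.E) :
    D k Q G w (lg k Q e) = DirectSum.of (fun g => gradeComp k Q G w g) (-(w e))
      ⟨lg k Q e, lg_mem k Q G w e⟩ := by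
  exact (D_mk k Q G w (lgen k Q (.ghost e))).trans
    ((Dfree_lgen k Q G w _).trans (of_eq k Q G w rfl rfl))

lemma D_pel (l : List Q.E) : ∀ (v : Q.V) (hc : Q.IsPath l)
    (hs : ∀ h : l ≠ [], Q.s (l.head h) = v),
    D k Q G w (pel k Q v l) = DirectSum.of (fun g => gradeComp k Q G w g) ((l.map w).sum)
      ⟨pel k Q v l, pel_mem k Q G w v l hc hs⟩ := by
  induction l with
  | nil =>
    intro v hc hs
    exact (congrArg _ (pel_nil k Q v)).trans
      ((D_lv k Q G w v).trans (of_eq k Q G w (by simp) (pel_nil k Q v).symm))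
  | cons e t ih =>
    intro v hc hs
    have hv : Q.s e = v := hs (by simp)
    have h1 : pel k Q v (e :: t) = le k Q e * pel k Q (Q.r e) t := by
      rw [pel_cons, ← hv, LPAux.src_le]
    have hc' : Q.IsPath t := isPath_tail hc
    have hs' : ∀ h : t ≠ [], Q.s (t.head h) = Q.r e := fun h =>
      (isPath_head hc _ (by simp [List.head?_eq_head h])).symm
    conv_lhs => rw [h1]
    rw [map_mul, D_le, ih (Q.r e) hc' hs', DirectSum.of_mul_of]
    exact of_eq k Q G w (by simp) h1.symm

lemma D_pst (l : List Q.E) : ∀ (v : Q.V) (hc : Q.IsPath l)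
    (hs : ∀ h : l ≠ [], Q.s (l.head h) = v),
    D k Q G w (pst k Q v l) = DirectSum.of (fun g => gradeComp k Q G w g) (-((l.map w).sum))
      ⟨pst k Q v l, pst_mem k Q G w v l hc hs⟩ := by
  induction l with
  | nil =>
    intro v hc hs
    exact (congrArg _ (pst_nil k Q v)).trans
      ((D_lv k Q G w v).trans (of_eq k Q G w (by simp) (pst_nil k Q v).symm))
  | cons e t ih =>
    intro v hc hs
    have hv : Q.s e = v := hs (by simp)
    have h1 : pst k Q v (e :: t) = pst k Q (Q.r e) t * lg k Q e := by
      rw [pst_cons, ← hv, LPAux.lg_src]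
    have hc' : Q.IsPath t := isPath_tail hc
    have hs' : ∀ h : t ≠ [], Q.s (t.head h) = Q.r e := fun h =>
      (isPath_head hc _ (by simp [List.head?_eq_head h])).symm
    conv_lhs => rw [h1]
    rw [map_mul, D_lg, ih (Q.r e) hc' hs', DirectSum.of_mul_of]
    exact of_eq k Q G w (by simp [neg_add_rev]) h1.symm

lemma D_pelem (p : QPath Q) :
    D k Q G w (pelem k Q p) = DirectSum.of (fun g => gradeComp k Q G w g)
      ((p.edges.map w).sum) ⟨pelem k Q p, pelem_mem k Q G w p⟩ :=
  D_pel k Q G w p.edges p.src p.chain p.hsrc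

lemma D_pstar (q : QPath Q) :
    D k Q G w (pstar k Q q) = DirectSum.of (fun g => gradeComp k Q G w g)
      (-((q.edges.map w).sum)) ⟨pstar k Q q, pstar_mem k Q G w q⟩ :=
  D_pst k Q G w q.edges q.src q.chain q.hsrc

lemma D_mem (g : G) (x : LPA k Q) (hx : x ∈ gradeComp k Q G w g) :
    D k Q G w x = DirectSum.of (fun g => gradeComp k Q G w g) g ⟨x, hx⟩ := by
  induction hx using Submodule.span_induction with
  | mem x hmem =>
    obtain ⟨p, q, hr, hgdeg, rfl⟩ := hmem
    rw [map_mul, D_pelem, D_pstar, DirectSum.of_mul_of]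
    exact of_eq k Q G w (by rw [← hgdeg, sub_eq_add_neg]) (SetLike.coe_gMul _ _ _)
  | zero =>
    rw [map_zero]
    exact ((congrArg _ (Subtype.ext rfl)).trans (map_zero _)).symm
  | add x y hxm hym ihx ihy =>
    rw [map_add, ihx, ihy, ← map_add]
    exact congrArg _ (Subtype.ext rfl)
  | smul c x hxm ihx =>
    rw [map_smul, ihx, ← DirectSum.of_smul]
    exact congrArg _ (Subtype.ext rfl)

lemma coeAdd_eq (x : ⨁ (g : G), gradeComp k Q G w g) :
    DirectSum.coeAddMonoidHom (gradeComp k Q G w) x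
      = DirectSum.coeAlgHom (gradeComp k Q G w) x := by
  induction x using DirectSum.induction_on with
  | zero => rw [map_zero, map_zero]
  | of i a => rw [DirectSum.coeAddMonoidHom_of, DirectSum.coeAlgHom_of]
  | add a b ha hb => rw [map_add, map_add, ha, hb]

noncomputable def decomposition : DirectSum.Decomposition (gradeComp k Q G w) where
  decompose' := D k Q G w
  left_inv x := by
    rw [coeAdd_eq]
    obtain ⟨a, rfl⟩ := RingQuot.mkAlgHom_surjective k (LRel k Q) x
    rw [D_mk, coeD_free]
  right_inv x := by
    induction x using DirectSum.induction_on with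
    | zero => rw [map_zero, map_zero]
    | of i a =>
      rw [DirectSum.coeAddMonoidHom_of]
      exact (D_mem k Q G w i a a.2).trans (congrArg _ (Subtype.ext rfl))
    | add a b ha hb => rw [map_add, map_add, ha, hb]

noncomputable def gradedRing : GradedRing (gradeComp k Q G w) :=
  { gradedMonoid k Q G w, decomposition k Q G w with }

end LPAux

/-- For any weight map `w : Q¹ → G` (with `w(e*) = -w(e)` and vertices of
weight `0`) the Cuntz–Krieger relations are homogeneous and the Leavitt path algebra
`L_k(Q)` is a `G`-graded algebra with the components `gradeComp`.  In particular, for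
`G = ℤ` and `w ≡ 1`, the degree-`n` component is
`span_k {p q* : length p − length q = n}`. -/
theorem stmt17 (k : Type) [Field k] (Q : Qvr) [Fintype Q.V]
    (G : Type) [AddGroup G] [DecidableEq G] (w : Q.E → G) :
    Nonempty (GradedRing (gradeComp k Q G w)) ∧
      ∀ n : ℤ, gradeComp k Q ℤ (fun _ => (1 : ℤ)) n =
        Submodule.span k {x : LPA k Q | ∃ p q : QPath Q, p.rng = q.rng ∧
          (p.edges.length : ℤ) - (q.edges.length : ℤ) = n ∧
          x = pelem k Q p * pstar k Q q} := by
  constructor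
  · exact ⟨LPAux.gradedRing k Q G w⟩
  · intro n
    unfold gradeComp
    congr 1
    ext x
    constructor
    · rintro ⟨p, q, h1, h2, h3⟩
      refine ⟨p, q, h1, ?_, h3⟩
      simpa using h2
    · rintro ⟨p, q, h1, h2, h3⟩
      refine ⟨p, q, h1, ?_, h3⟩
      simpa using h2
end

section
/- Let Q be a finite quiver with no sinks, P a partition of Q¹ obtained by partitioning each s⁻¹(v) into nonempty subsets ξ¹ᵥ,…,ξ^{m(v)}ᵥ, and Q_s(P) the out-split quiver. Then Q and Q_s(P) are elementary strong shift equivalent. -/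
/-- The out-split quiver `Q_s(𝒫)` determined by the data `m : Q⁰ → ℕ` (number of classes of
the partition of `s⁻¹(v)`; `m v = 0` exactly when `v` is a sink) and `c : Q¹ → ℕ` (the class
of each edge in the partition of `s⁻¹(s(e))`).  Vertices are the pairs `vⁱ` (`1 ≤ i ≤ m v`)
together with `v⁰` for sinks `v`; edges are the pairs `eʲ` (`1 ≤ j ≤ m (r e)`) together with
`e⁰` when `r e` is a sink, with `s(eʲ) = s(e)ⁱ` where `i = c e`, and `r(eʲ) = r(e)ʲ`. -/
@[reducible] def OutSplit (Q : Qvr) (m : Q.V → ℕ) (c : Q.E → ℕ)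
    (hc : ∀ e : Q.E, 1 ≤ c e ∧ c e ≤ m (Q.s e)) : Qvr where
  V := {p : Q.V × ℕ // (1 ≤ p.2 ∧ p.2 ≤ m p.1) ∨ (p.2 = 0 ∧ m p.1 = 0)}
  E := {q : Q.E × ℕ // (1 ≤ q.2 ∧ q.2 ≤ m (Q.r q.1)) ∨ (q.2 = 0 ∧ m (Q.r q.1) = 0)}
  s := fun q => ⟨(Q.s q.1.1, c q.1.1), Or.inl (hc q.1.1)⟩
  r := fun q => ⟨(Q.r q.1.1, q.1.2), q.2⟩

/-- A finite quiver with no sinks is elementary strong shift equivalent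
to any of its out-split quivers. -/
theorem stmt19 (Q : Qvr) [Fintype Q.V] [Fintype Q.E]
    (hnosink : ∀ v : Q.V, ∃ e : Q.E, Q.s e = v)
    (m : Q.V → ℕ) (c : Q.E → ℕ)
    (hc : ∀ e : Q.E, 1 ≤ c e ∧ c e ≤ m (Q.s e))
    (hm0 : ∀ v : Q.V, m v = 0 ↔ ¬ ∃ e : Q.E, Q.s e = v)
    (hcls : ∀ (v : Q.V) (i : ℕ), 1 ≤ i → i ≤ m v → ∃ e : Q.E, Q.s e = v ∧ c e = i) :
    ElemSSEQ Q (OutSplit Q m c hc) := by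
  refine ⟨(OutSplit Q m c hc).V, Q.E,
    (fun a => a.1.1), id,
    (fun e => ⟨(Q.s e, c e), Or.inl (hc e)⟩), Q.r,
    ⟨fun e => ⟨(⟨(Q.s e, c e), Or.inl (hc e)⟩, e), rfl⟩,
     fun p => p.1.2,
     fun e => rfl,
     ?_⟩,
    ⟨fun q => ⟨(q.1.1, ⟨(Q.r q.1.1, q.1.2), q.2⟩), rfl⟩,
     fun p => ⟨(p.1.1, p.1.2.1.2), by
        have h := p.1.2.2
        rw [show p.1.2.1.1 = Q.r p.1.1 from p.2.symm] at h
        exact h⟩,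
     fun q => by apply Subtype.ext; rfl,
     ?_⟩,
    fun e => ⟨rfl, rfl⟩, fun q => ⟨rfl, rfl⟩⟩
  · rintro ⟨⟨a, b⟩, h⟩
    apply Subtype.ext
    dsimp only
    ext
    · exact congrArg (fun x => x.1.1) h.symm
    · exact congrArg (fun x => x.1.2) h.symm
    · rfl
  · rintro ⟨⟨b, a⟩, h⟩
    apply Subtype.ext
    dsimp only
    ext
    · rfl
    · exact h
    · rfl
end
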